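/- arXiv:math/0402116 — 4 statements merged into one kernel-verified Lean document; each statement's English description precedes it below -/
import Mathlib

section
/- Let a_1,…,a_l (l ≥ 1) be integers that are pairwise distinct modulo n, let i be an index with 2 ≤ i ≤ l, and let h,k ∈ ℤ. Then, as n-periodic permutations of ℤ (products being composition, the right-hand factor applied first), (a_1,…,a_l)_{[h]} ∘ (a_1, a_i + kn) = (a_{i+1},…,a_l, a_1 + hn)_{[h+k]} ∘ (a_2,…,a_i)_{[−k]}. -/
/-- `w` is an `n`-periodic permutation of `ℤ`. -/
def IsPeriodic (n : ℕ) (w : Equiv.Perm ℤ) : Prop :=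
  ∀ x : ℤ, w (x + n) = w x + n

/-- `n` times the shift of the permutation `w`. -/
noncomputable def shiftSum (n : ℕ) (w : Equiv.Perm ℤ) : ℤ :=
  ∑ x ∈ Finset.Icc (1 : ℤ) (n : ℤ), (w x - x)

/-- Membership in the group `W` of type `Ã_{n-1}`: the `n`-periodic
permutations of `ℤ` of shift `0`. -/
def InAffineW (n : ℕ) (w : Equiv.Perm ℤ) : Prop :=
  IsPeriodic n w ∧ shiftSum n w = 0

/-- `w` is the `n`-periodic transposition `(a, b)`. -/
def IsTransposition (n : ℕ) (a b : ℤ) (w : Equiv.Perm ℤ) : Prop :=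
  (∀ k : ℤ, w (a + k * n) = b + k * n) ∧
  (∀ k : ℤ, w (b + k * n) = a + k * n) ∧
  (∀ x : ℤ, ¬ (n : ℤ) ∣ (x - a) → ¬ (n : ℤ) ∣ (x - b) → w x = x)

/-- `w` is a reflection of `W`. -/
def IsReflection (n : ℕ) (w : Equiv.Perm ℤ) : Prop :=
  ∃ a b : ℤ, ¬ (n : ℤ) ∣ (a - b) ∧ IsTransposition n a b w

/-- The reflection length `l_R` of an element of `W`. -/
noncomputable def reflLength (n : ℕ) (w : Equiv.Perm ℤ) : ℕ :=
  sInf {m | ∃ L : List (Equiv.Perm ℤ), L.length = m ∧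
    (∀ r ∈ L, IsReflection n r) ∧ L.prod = w}

/-- `v ≼ w` : `v` divides `w` with respect to the reflection length. -/
def RDvd (n : ℕ) (v w : Equiv.Perm ℤ) : Prop :=
  reflLength n w = reflLength n v + reflLength n (v⁻¹ * w)

/-- `w` is the `n`-periodic cycle `(L)_{[h]}` : it sends the `i`-th entry of `L`
(translated by `k * n`) to the `(i+1)`-th one, the last entry to the first one
shifted by `h * n`, and fixes every integer not congruent mod `n` to an entry of `L`. -/
def IsCycleList (n : ℕ) (L : List ℤ) (h : ℤ) (w : Equiv.Perm ℤ) : Prop :=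
  (∀ i : ℕ, i + 1 < L.length → ∀ k : ℤ,
      w (L.getD i 0 + k * n) = L.getD (i + 1) 0 + k * n) ∧
  (∀ hL : L ≠ [], ∀ k : ℤ, w (L.getLast hL + k * n) = L.head hL + (h + k) * n) ∧
  (∀ x : ℤ, (∀ a ∈ L, ¬ (n : ℤ) ∣ (x - a)) → w x = x)



lemma getD_range'_map (a : ℕ → ℤ) (s len j : ℕ) (hj : j < len) :
    ((List.range' s len).map a).getD j 0 = a (s + j) := by
  rw [List.getD_eq_getElem?_getD]
  simp [List.getElem?_range', hj]

lemma getLast_range'_map (a : ℕ → ℤ) (s len : ℕ)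
    (hL : (List.range' s len).map a ≠ []) :
    ((List.range' s len).map a).getLast hL = a (s + len - 1) := by
  rw [List.getLast_eq_getElem]
  simp only [List.length_map, List.length_range', List.getElem_map, List.getElem_range']
  congr 1
  have : 0 < len := by
    by_contra hc
    exact hL (by simp [Nat.eq_zero_of_not_pos hc])
  omega

lemma head_range'_map (a : ℕ → ℤ) (s len : ℕ)
    (hL : (List.range' s len).map a ≠ []) :
    ((List.range' s len).map a).head hL = a s := by
  rw [List.head_eq_getElem]
  simp [List.getElem_range']

lemma range'_map_ne_nil (a : ℕ → ℤ) (s len : ℕ) (hlen : 0 < len) :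
    (List.range' s len).map a ≠ [] := by
  intro hc
  apply_fun List.length at hc
  simp at hc
  omega

theorem statement0 (n : ℕ) (hn : 2 ≤ n) (l : ℕ) (hl : 1 ≤ l) (a : ℕ → ℤ)
    (hdist : ∀ i j, 1 ≤ i → i < j → j ≤ l → ¬ (n : ℤ) ∣ (a i - a j))
    (i : ℕ) (hi2 : 2 ≤ i) (hil : i ≤ l) (h k : ℤ)
    (w₁ r w₂ w₃ : Equiv.Perm ℤ)
    (hw₁ : IsCycleList n ((List.range' 1 l).map a) h w₁)
    (hr : IsTransposition n (a 1) (a i + k * n) r)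
    (hw₂ : IsCycleList n (((List.range' (i + 1) (l - i)).map a) ++ [a 1 + h * n])
      (h + k) w₂)
    (hw₃ : IsCycleList n ((List.range' 2 (i - 1)).map a) (-k) w₃) :
    w₁ * r = w₂ * w₃ := by
  obtain ⟨hw₁a, hw₁b, hw₁c⟩ := hw₁
  obtain ⟨hra, hrb, hrc⟩ := hr
  obtain ⟨hw₂a, hw₂b, hw₂c⟩ := hw₂
  obtain ⟨hw₃a, hw₃b, hw₃c⟩ := hw₃
  have hl2 : 2 ≤ l := le_trans hi2 hil
  -- pairwise non-congruence, symmetric version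
  have hne : ∀ j j', 1 ≤ j → j ≤ l → 1 ≤ j' → j' ≤ l → j ≠ j' →
      ¬ (n : ℤ) ∣ (a j - a j') := by
    intro j j' h1 h2 h3 h4 h5 hd
    rcases lt_or_gt_of_ne h5 with hlt | hgt
    · exact hdist j j' h1 hlt h4 hd
    · refine hdist j' j h3 hgt h2 ?_
      rw [show a j' - a j = -(a j - a j') by ring]
      exact dvd_neg.mpr hd
  have hshift : ∀ (x c m : ℤ), ((n : ℤ) ∣ (x + m * n - c)) ↔ ((n : ℤ) ∣ (x - c)) := by
    intro x c m
    rw [show x + m * n - c = m * n + (x - c) by ring]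
    exact dvd_add_right ⟨m, by ring⟩
  have hnd : ∀ (jx jc : ℕ) (m : ℤ), 1 ≤ jx → jx ≤ l → 1 ≤ jc → jc ≤ l → jx ≠ jc →
      ¬ (n : ℤ) ∣ (a jx + m * n - a jc) := by
    intro jx jc m h1 h2 h3 h4 h5
    rw [hshift]
    exact hne jx jc h1 h2 h3 h4 h5
  -- w₁ actions
  have A1 : ∀ j, 1 ≤ j → j < l → ∀ m : ℤ, w₁ (a j + m * n) = a (j + 1) + m * n := by
    intro j hj1 hjl m
    have := hw₁a (j - 1) (by simp; omega) m
    rw [getD_range'_map a 1 l (j - 1) (by omega),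
        getD_range'_map a 1 l (j - 1 + 1) (by omega),
        show 1 + (j - 1) = j by omega, show 1 + (j - 1 + 1) = j + 1 by omega] at this
    exact this
  have A1b : ∀ m : ℤ, w₁ (a l + m * n) = a 1 + (h + m) * n := by
    intro m
    have hne1 := range'_map_ne_nil a 1 l (by omega)
    have := hw₁b hne1 m
    rw [getLast_range'_map, head_range'_map, show 1 + l - 1 = l by omega] at this
    exact this
  have A1c : ∀ x : ℤ, (∀ j, 1 ≤ j → j ≤ l → ¬ (n : ℤ) ∣ (x - a j)) → w₁ x = x := by
    intro x hx
    apply hw₁c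
    intro b hb
    simp only [List.mem_map, List.mem_range'_1] at hb
    obtain ⟨t, ⟨ht1, ht2⟩, rfl⟩ := hb
    exact hx t ht1 (by omega)
  -- r actions
  have R1 : ∀ m : ℤ, r (a 1 + m * n) = a i + (k + m) * n := by
    intro m; rw [hra m]; ring
  have R2 : ∀ m : ℤ, r (a i + m * n) = a 1 + (m - k) * n := by
    intro m
    have := hrb (m - k)
    rw [show a i + k * n + (m - k) * n = a i + m * n by ring] at this
    exact this
  have R3 : ∀ x : ℤ, ¬ (n : ℤ) ∣ (x - a 1) → ¬ (n : ℤ) ∣ (x - a i) → r x = x := by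
    intro x h1 h2
    refine hrc x h1 ?_
    intro hd
    apply h2
    rw [show x - a i = (x - (a i + k * n)) + k * n by ring]
    exact dvd_add hd ⟨k, by ring⟩
  -- w₃ actions
  have W3a : ∀ j, 2 ≤ j → j < i → ∀ m : ℤ, w₃ (a j + m * n) = a (j + 1) + m * n := by
    intro j hj2 hji m
    have := hw₃a (j - 2) (by simp; omega) m
    rw [getD_range'_map a 2 (i - 1) (j - 2) (by omega),
        getD_range'_map a 2 (i - 1) (j - 2 + 1) (by omega),
        show 2 + (j - 2) = j by omega, show 2 + (j - 2 + 1) = j + 1 by omega] at this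
    exact this
  have W3b : ∀ m : ℤ, w₃ (a i + m * n) = a 2 + (m - k) * n := by
    intro m
    have hne3 := range'_map_ne_nil a 2 (i - 1) (by omega)
    have := hw₃b hne3 m
    rw [getLast_range'_map, head_range'_map, show 2 + (i - 1) - 1 = i by omega] at this
    rw [this]; ring
  have W3c : ∀ x : ℤ, (∀ j, 2 ≤ j → j ≤ i → ¬ (n : ℤ) ∣ (x - a j)) → w₃ x = x := by
    intro x hx
    apply hw₃c
    intro b hb
    simp only [List.mem_map, List.mem_range'_1] at hb
    obtain ⟨t, ⟨ht1, ht2⟩, rfl⟩ := hb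
    exact hx t ht1 (by omega)
  -- w₂ list facts
  set L₂ : List ℤ := ((List.range' (i + 1) (l - i)).map a) ++ [a 1 + h * n] with hL₂
  have hL₂len : L₂.length = l - i + 1 := by simp [hL₂]
  have hgetD2 : ∀ t, t < l - i → L₂.getD t 0 = a (i + 1 + t) := by
    intro t ht
    rw [hL₂, List.getD_eq_getElem?_getD, List.getElem?_append_left (by simp [ht])]
    rw [← List.getD_eq_getElem?_getD, getD_range'_map a _ _ _ ht]
  have hgetD2' : L₂.getD (l - i) 0 = a 1 + h * n := by
    rw [hL₂, List.getD_eq_getElem?_getD, List.getElem?_append_right (by simp)]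
    simp
  have hL₂ne : L₂ ≠ [] := by simp [hL₂]
  have hlast2 : L₂.getLast hL₂ne = a 1 + h * n := by
    simp [hL₂, List.getLast_append]
  -- w₂ actions
  have W2a : ∀ j, i + 1 ≤ j → j < l → ∀ m : ℤ, w₂ (a j + m * n) = a (j + 1) + m * n := by
    intro j hj1 hjl m
    have := hw₂a (j - (i + 1)) (by rw [hL₂len]; omega) m
    rw [hgetD2 (j - (i + 1)) (by omega), hgetD2 (j - (i + 1) + 1) (by omega),
        show i + 1 + (j - (i + 1)) = j by omega,
        show i + 1 + (j - (i + 1) + 1) = j + 1 by omega] at this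
    exact this
  have W2b : i < l → ∀ m : ℤ, w₂ (a l + m * n) = a 1 + (h + m) * n := by
    intro hilt m
    have := hw₂a (l - i - 1) (by rw [hL₂len]; omega) m
    rw [hgetD2 (l - i - 1) (by omega), show l - i - 1 + 1 = l - i by omega, hgetD2',
        show i + 1 + (l - i - 1) = l by omega] at this
    rw [this]; ring
  have W2fix : ∀ x : ℤ, (∀ j, i + 1 ≤ j → j ≤ l → ¬ (n : ℤ) ∣ (x - a j)) →
      ¬ (n : ℤ) ∣ (x - a 1) → w₂ x = x := by
    intro x hx h1
    apply hw₂c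
    intro b hb
    rw [hL₂] at hb
    rcases List.mem_append.mp hb with hb | hb
    · simp only [List.mem_map, List.mem_range'_1] at hb
      obtain ⟨t, ⟨ht1, ht2⟩, rfl⟩ := hb
      exact hx t ht1 (by omega)
    · simp only [List.mem_singleton] at hb
      subst hb
      intro hd
      apply h1
      rw [show x - a 1 = (x - (a 1 + h * n)) + h * n by ring]
      exact dvd_add hd ⟨h, by ring⟩
  -- action on the class of a 1
  have W2one : ∀ m : ℤ, w₂ (a 1 + m * n) =
      (if i < l then a (i + 1) + (k + m) * n else a 1 + (h + k + m) * n) := by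
    intro m
    have hhead0 : L₂.head hL₂ne = L₂.getD 0 0 := by
      rw [List.head_eq_getElem, List.getD_eq_getElem?_getD,
        List.getElem?_eq_getElem (by rw [hL₂len]; omega)]
      rfl
    have hhead : L₂.head hL₂ne = if i < l then a (i + 1) else a 1 + h * n := by
      by_cases hilt : i < l
      · rw [hhead0, hgetD2 0 (by omega)]
        simp [hilt]
      · have h0 : l - i = 0 := by omega
        rw [hhead0, ← h0, hgetD2']
        simp [hilt]
    have := hw₂b hL₂ne (m - h)
    rw [hlast2, show a 1 + h * n + (m - h) * n = a 1 + m * n by ring, hhead] at this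
    rw [this]
    by_cases hilt : i < l
    · simp only [hilt, if_true]; ring
    · simp only [hilt, if_false]; ring
  -- main case analysis
  ext x
  simp only [Equiv.Perm.mul_apply]
  by_cases hx : ∃ j : ℕ, ∃ m : ℤ, 1 ≤ j ∧ j ≤ l ∧ x = a j + m * n
  · obtain ⟨j, m, hj1, hjl, rfl⟩ := hx
    by_cases hj1' : j = 1
    · subst hj1'
      rw [R1, W3c _ (fun j' hj2 hji' => hnd 1 j' m (by omega) (by omega) (by omega)
          (by omega) (by omega)), W2one]
      by_cases hilt : i < l
      · rw [A1 i (by omega) hilt, if_pos hilt]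
      · have hieq : i = l := by omega
        rw [if_neg hilt, hieq, A1b]
        ring
    · by_cases hji : j < i
      · have hj2 : 2 ≤ j := by omega
        rw [R3 _ (hnd j 1 m hj1 hjl (by omega) hl (by omega))
            (hnd j i m hj1 hjl (by omega) hil (by omega)),
          A1 j hj1 (by omega), W3a j hj2 hji,
          W2fix _ (fun j' hj1' hjl' => hnd (j + 1) j' m (by omega) (by omega)
            (by omega) hjl' (by omega))
            (hnd (j + 1) 1 m (by omega) (by omega) (by omega) hl (by omega))]
      · by_cases hjieq : j = i
        · subst hjieq
          rw [R2, A1 1 le_rfl (by omega), W3b,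
            W2fix _ (fun j' hj1' hjl' => hnd 2 j' (m - k) (by omega) (by omega)
              (by omega) hjl' (by omega))
              (hnd 2 1 (m - k) (by omega) (by omega) (by omega) hl (by omega))]
        · have hij : i < j := by omega
          have hrfix := R3 (a j + m * n) (hnd j 1 m hj1 hjl (by omega) hl (by omega))
            (hnd j i m hj1 hjl (by omega) hil (by omega))
          have hw3fix := W3c (a j + m * n)
            (fun j' hj2' hji' => hnd j j' m hj1 hjl (by omega) (by omega) (by omega))
          by_cases hjl' : j < l
          · rw [hrfix, A1 j hj1 hjl', hw3fix, W2a j (by omega) hjl']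
          · have hjeq : j = l := by omega
            subst hjeq
            rw [hrfix, A1b, hw3fix, W2b (by omega)]
  · push_neg at hx
    have hfix : ∀ j, 1 ≤ j → j ≤ l → ¬ (n : ℤ) ∣ (x - a j) := by
      intro j hj1 hjl hd
      obtain ⟨c, hc⟩ := hd
      exact absurd (by linarith : x = a j + c * n)
        (by have := hx j c; tauto)
    rw [R3 _ (hfix 1 le_rfl hl) (hfix i (by omega) hil), A1c _ hfix,
      W3c _ (fun j' hj2 hji' => hfix j' (by omega) (by omega)),
      W2fix _ (fun j' hj1' hjl' => hfix j' (by omega) hjl') (hfix 1 le_rfl hl)]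
end

section
/- Let T ⊆ ℤ satisfy T + n = T, and let W̃_T = {w ∈ W : w(x) = x for all x ∈ ℤ∖T} (a quasi-parabolic subgroup of W). Then for every w ∈ W̃_T, the reflection length of w computed inside W̃_T equals l_R(w); that is, the least m such that w is a product of m reflections of W each belonging to W̃_T equals the least m such that w is a product of m reflections of W. -/
namespace Aux

lemma dvd_shift {n x a b : ℤ} (h : n ∣ x - a) : n ∣ x - b ↔ n ∣ a - b := by
  constructor <;> intro h2
  · have := dvd_sub h2 h
    have e : x - b - (x - a) = a - b := by ring
    rwa [e] at this
  · have := dvd_add h h2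
    have e : x - a + (a - b) = x - b := by ring
    rwa [e] at this

def ptFun (n : ℕ) (a b x : ℤ) : ℤ :=
  if (n:ℤ) ∣ x - a then b + (x - a) else if (n:ℤ) ∣ x - b then a + (x - b) else x

lemma ptFun_left {n : ℕ} {a b x : ℤ} (hx : (n:ℤ) ∣ x - a) :
    ptFun n a b x = b + (x - a) := if_pos hx

lemma ptFun_right {n : ℕ} {a b x : ℤ} (h : ¬ (n:ℤ) ∣ a - b) (hx : (n:ℤ) ∣ x - b) :
    ptFun n a b x = a + (x - b) := by
  have h1 : ¬ (n:ℤ) ∣ x - a := fun hc => h ((dvd_shift hc).mp hx)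
  rw [ptFun, if_neg h1, if_pos hx]

lemma ptFun_other {n : ℕ} {a b x : ℤ} (hx1 : ¬ (n:ℤ) ∣ x - a)
    (hx2 : ¬ (n:ℤ) ∣ x - b) : ptFun n a b x = x := by
  rw [ptFun, if_neg hx1, if_neg hx2]

lemma ptFun_invol {n : ℕ} {a b : ℤ} (h : ¬ (n:ℤ) ∣ a - b) :
    Function.Involutive (ptFun n a b) := by
  have h' : ¬ (n:ℤ) ∣ b - a := fun hc => h (by
    rw [show a - b = -(b - a) by ring]; exact hc.neg_right)
  intro x
  by_cases h1 : (n:ℤ) ∣ x - a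
  · rw [ptFun_left h1, ptFun_right h (by rw [show b + (x-a) - b = x - a by ring]; exact h1)]
    ring
  · by_cases h2 : (n:ℤ) ∣ x - b
    · rw [ptFun_right h h2, ptFun_left (by rw [show a + (x-b) - a = x - b by ring]; exact h2)]
      ring
    · rw [ptFun_other h1 h2, ptFun_other h1 h2]

noncomputable def pt (n : ℕ) (a b : ℤ) : Equiv.Perm ℤ :=
  if h : (n:ℤ) ∣ a - b then 1 else (ptFun_invol h).toPerm

variable {n : ℕ} {a b : ℤ}

lemma pt_apply (h : ¬ (n:ℤ) ∣ a - b) (x : ℤ) : pt n a b x = ptFun n a b x := by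
  rw [pt, dif_neg h]; rfl

lemma pt_left (h : ¬ (n:ℤ) ∣ a - b) {x : ℤ} (hx : (n:ℤ) ∣ x - a) :
    pt n a b x = b + (x - a) := by
  rw [pt_apply h, ptFun, if_pos hx]

lemma pt_right (h : ¬ (n:ℤ) ∣ a - b) {x : ℤ} (hx : (n:ℤ) ∣ x - b) :
    pt n a b x = a + (x - b) := by
  have h1 : ¬ (n:ℤ) ∣ x - a := by
    intro hc; exact h ((dvd_shift hc).mp hx)
  rw [pt_apply h, ptFun, if_neg h1, if_pos hx]

lemma pt_other (h : ¬ (n:ℤ) ∣ a - b) {x : ℤ} (hx1 : ¬ (n:ℤ) ∣ x - a)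
    (hx2 : ¬ (n:ℤ) ∣ x - b) : pt n a b x = x := by
  rw [pt_apply h, ptFun, if_neg hx1, if_neg hx2]

lemma pt_isTransposition (h : ¬ (n:ℤ) ∣ a - b) : IsTransposition n a b (pt n a b) := by
  refine ⟨fun k => ?_, fun k => ?_, fun x hx1 hx2 => pt_other h hx1 hx2⟩
  · rw [pt_left h ⟨k, by ring⟩]; ring
  · rw [pt_right h ⟨k, by ring⟩]; ring

lemma pt_isReflection (h : ¬ (n:ℤ) ∣ a - b) : IsReflection n (pt n a b) :=
  ⟨a, b, h, pt_isTransposition h⟩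

lemma eq_pt_of_isTransposition {w : Equiv.Perm ℤ} (h : ¬ (n:ℤ) ∣ a - b)
    (hw : IsTransposition n a b w) : w = pt n a b := by
  obtain ⟨h1, h2, h3⟩ := hw
  ext x
  by_cases hx1 : (n:ℤ) ∣ x - a
  · obtain ⟨k, hk⟩ := hx1
    have hx : x = a + k * n := by
      have hk' : x - a = k * n := by rw [hk]; ring
      linarith
    rw [hx, h1 k, pt_left h ⟨k, by push_cast; ring⟩]
    ring
  · by_cases hx2 : (n:ℤ) ∣ x - b
    · obtain ⟨k, hk⟩ := hx2
      have hx : x = b + k * n := by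
        have hk' : x - b = k * n := by rw [hk]; ring
        linarith
      rw [hx, h2 k, pt_right h ⟨k, by push_cast; ring⟩]
      ring
    · rw [h3 x hx1 hx2, pt_other h hx1 hx2]

lemma isReflection_iff {w : Equiv.Perm ℤ} :
    IsReflection n w ↔ ∃ a b : ℤ, ¬ (n:ℤ) ∣ a - b ∧ w = pt n a b := by
  constructor
  · rintro ⟨a, b, h, hw⟩
    exact ⟨a, b, h, eq_pt_of_isTransposition h hw⟩
  · rintro ⟨a, b, h, rfl⟩
    exact pt_isReflection h

lemma pt_symm (h : ¬ (n:ℤ) ∣ a - b) : pt n a b = pt n b a := by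
  have h' : ¬ (n:ℤ) ∣ b - a := fun hc => h (by rw [show a-b = -(b-a) by ring]; exact hc.neg_right)
  ext x
  by_cases hx1 : (n:ℤ) ∣ x - a
  · rw [pt_left h hx1, pt_right h' hx1]
  · by_cases hx2 : (n:ℤ) ∣ x - b
    · rw [pt_right h hx2, pt_left h' hx2]
    · rw [pt_other h hx1 hx2, pt_other h' hx2 hx1]

lemma pt_shiftl {n : ℕ} {a b d : ℤ} (h : ¬ (n:ℤ) ∣ a - b) (hd : (n:ℤ) ∣ d) :
    pt n (a + d) b = pt n a (b - d) := by
  have h1 : ¬ (n:ℤ) ∣ (a + d) - b := by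
    intro hc
    have := dvd_sub hc hd
    rw [show a + d - b - d = a - b by ring] at this
    exact h this
  have h2 : ¬ (n:ℤ) ∣ a - (b - d) := by
    intro hc
    have := dvd_sub hc hd
    rw [show a - (b - d) - d = a - b by ring] at this
    exact h this
  ext x
  by_cases hx1 : (n:ℤ) ∣ x - (a + d)
  · have hx1' : (n:ℤ) ∣ x - a := by
      have := dvd_add hx1 hd
      rwa [show x - (a + d) + d = x - a by ring] at this
    rw [pt_left h1 hx1, pt_left h2 hx1']
    ring
  · have hx1' : ¬ (n:ℤ) ∣ x - a := by
      intro hc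
      have := dvd_sub hc hd
      rw [show x - a - d = x - (a + d) by ring] at this
      exact hx1 this
    by_cases hx2 : (n:ℤ) ∣ x - b
    · have hx2' : (n:ℤ) ∣ x - (b - d) := by
        have := dvd_add hx2 hd
        rwa [show x - b + d = x - (b - d) by ring] at this
      rw [pt_right h1 hx2, pt_right h2 hx2']
      ring
    · have hx2' : ¬ (n:ℤ) ∣ x - (b - d) := by
        intro hc
        have := dvd_sub hc hd
        rw [show x - (b - d) - d = x - b by ring] at this
        exact hx2 this
      rw [pt_other h1 hx1 hx2, pt_other h2 hx1' hx2']

end Aux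
namespace Aux

variable {n : ℕ}

lemma periodic_mul {u v : Equiv.Perm ℤ} (hu : IsPeriodic n u) (hv : IsPeriodic n v) :
    IsPeriodic n (u * v) := fun x => by
  simp only [Equiv.Perm.mul_apply]; rw [hv x, hu (v x)]

lemma periodic_one : IsPeriodic n (1 : Equiv.Perm ℤ) := fun x => rfl

lemma periodic_inv {u : Equiv.Perm ℤ} (hu : IsPeriodic n u) : IsPeriodic n u⁻¹ := by
  intro x
  apply u.injective
  rw [(show ∀ y, u (u⁻¹ y) = y from fun y => u.apply_symm_apply y), hu, (show ∀ y, u (u⁻¹ y) = y from fun y => u.apply_symm_apply y)]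

lemma periodic_prod {L : List (Equiv.Perm ℤ)} (h : ∀ r ∈ L, IsPeriodic n r) :
    IsPeriodic n L.prod := by
  induction L with
  | nil => exact periodic_one
  | cons a l ih =>
    rw [List.prod_cons]
    exact periodic_mul (h a List.mem_cons_self) (ih fun r hr => h r (List.mem_cons_of_mem a hr))

lemma periodic_int {u : Equiv.Perm ℤ} (hu : IsPeriodic n u) (x k : ℤ) :
    u (x + k * n) = u x + k * n := by
  induction k using Int.induction_on with
  | zero => simp
  | succ i ih =>
    have : x + (i + 1) * (n:ℤ) = (x + i * n) + n := by ring
    rw [this, hu (x + i * n), ih]; ring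
  | pred i ih =>
    have : x + (-i - 1) * (n:ℤ) = (x + (-i) * n) - n := by push_cast; ring
    rw [this]
    have h2 : u ((x + (-i) * n) - n + n) = u ((x + (-i) * n) - n) + n := hu _
    have h3 : (x + (-i) * n) - n + n = x + (-i) * n := by ring
    rw [h3] at h2
    have := ih
    push_cast at this ⊢
    linarith [h2, this]

lemma periodic_dvd {u : Equiv.Perm ℤ} (hu : IsPeriodic n u) {x y : ℤ}
    (h : (n:ℤ) ∣ x - y) : (n:ℤ) ∣ u x - u y := by
  obtain ⟨k, hk⟩ := h
  have hx : x = y + k * n := by linarith [hk]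
  rw [hx, periodic_int hu y k]
  exact ⟨k, by ring⟩

lemma periodic_dvd_iff {u : Equiv.Perm ℤ} (hu : IsPeriodic n u) {x y : ℤ} :
    (n:ℤ) ∣ u x - u y ↔ (n:ℤ) ∣ x - y := by
  constructor
  · intro h
    have := periodic_dvd (periodic_inv hu) h
    simpa using this
  · exact periodic_dvd hu

lemma dvd_succ {n x a : ℤ} : n ∣ (x + n) - a ↔ n ∣ x - a := by
  constructor <;> intro h
  · have := dvd_sub h (dvd_refl n)
    rwa [show x + n - a - n = x - a by ring] at this
  · have := dvd_add h (dvd_refl n)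
    rwa [show x - a + n = x + n - a by ring] at this

lemma pt_periodic {a b : ℤ} : IsPeriodic n (pt n a b) := by
  by_cases h : (n:ℤ) ∣ a - b
  · rw [pt, dif_pos h]; exact periodic_one
  · intro x
    by_cases hx1 : (n:ℤ) ∣ x - a
    · rw [pt_left h hx1, pt_left h (dvd_succ.mpr hx1)]
      ring
    · by_cases hx2 : (n:ℤ) ∣ x - b
      · rw [pt_right h hx2, pt_right h (dvd_succ.mpr hx2)]
        ring
      · rw [pt_other h hx1 hx2,
          pt_other h (fun hc => hx1 (dvd_succ.mp hc)) (fun hc => hx2 (dvd_succ.mp hc))]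

/-- conjugation -/
lemma pt_conj {a b : ℤ} (h : ¬ (n:ℤ) ∣ a - b) {c : Equiv.Perm ℤ} (hc : IsPeriodic n c) :
    c * pt n a b * c⁻¹ = pt n (c a) (c b) := by
  have h' : ¬ (n:ℤ) ∣ c a - c b := fun hc2 => h ((periodic_dvd_iff hc).mp hc2)
  ext x
  simp only [Equiv.Perm.mul_apply]
  set y := c⁻¹ x with hy
  have hxy : x = c y := by rw [hy]; simp
  by_cases h1 : (n:ℤ) ∣ y - a
  · have h1' : (n:ℤ) ∣ x - c a := by rw [hxy]; exact periodic_dvd hc h1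
    rw [pt_left h h1, pt_left h' h1']
    obtain ⟨k, hk⟩ := h1
    have : b + (y - a) = b + k * n := by rw [hk]; ring
    rw [this, periodic_int hc b k, hxy]
    have : y = a + k * n := by linarith [hk]
    rw [this, periodic_int hc a k]
    ring
  · have h1' : ¬ (n:ℤ) ∣ x - c a := by rw [hxy]; rw [periodic_dvd_iff hc]; exact h1
    by_cases h2 : (n:ℤ) ∣ y - b
    · have h2' : (n:ℤ) ∣ x - c b := by rw [hxy]; exact periodic_dvd hc h2
      rw [pt_right h h2, pt_right h' h2']
      obtain ⟨k, hk⟩ := h2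
      have e : a + (y - b) = a + k * n := by rw [hk]; ring
      rw [e, periodic_int hc a k, hxy]
      have e2 : y = b + k * n := by linarith [hk]
      rw [e2, periodic_int hc b k]
      ring
    · have h2' : ¬ (n:ℤ) ∣ x - c b := by rw [hxy]; rw [periodic_dvd_iff hc]; exact h2
      rw [pt_other h h1 h2, pt_other h' h1' h2', hxy]

end Aux
namespace Aux

variable {n : ℕ}

lemma zdvd_iff {e : ℤ} : (n:ℤ) ∣ e ↔ ((e : ZMod n) = 0) :=
  (ZMod.intCast_zmod_eq_zero_iff_dvd e n).symm

lemma zeq {e f : ℤ} (h : (n:ℤ) ∣ e - f) : (e : ZMod n) = (f : ZMod n) := by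
  have := zdvd_iff.mp h
  push_cast at this
  exact sub_eq_zero.mp this

lemma zeq' {e f : ℤ} (h : (e : ZMod n) = (f : ZMod n)) : (n:ℤ) ∣ e - f := by
  apply zdvd_iff.mpr
  push_cast
  exact sub_eq_zero.mpr h

lemma pt_mul_self {a b : ℤ} (h : ¬ (n:ℤ) ∣ a - b) : pt n a b * pt n a b = 1 := by
  ext x
  simp only [Equiv.Perm.mul_apply, Equiv.Perm.one_apply]
  rw [pt_apply h, pt_apply h]
  exact ptFun_invol h x

lemma surg2 {a b₁ b₂ : ℤ} (h1 : ¬ (n:ℤ) ∣ a - b₁) (h2 : ¬ (n:ℤ) ∣ a - b₂)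
    (h3 : ¬ (n:ℤ) ∣ b₁ - b₂) :
    pt n a b₁ * pt n a b₂ = pt n b₁ b₂ * pt n a b₁ := by
  ext x
  simp only [Equiv.Perm.mul_apply]
  by_cases hxa : (n:ℤ) ∣ x - a
  · have hx := zeq hxa
    have c1 : ¬ (n:ℤ) ∣ (b₂ + (x - a)) - a := fun hc => by
      have := zeq hc; push_cast at this; exact h2 (zeq' (by linear_combination hx - this))
    have c2 : ¬ (n:ℤ) ∣ (b₂ + (x - a)) - b₁ := fun hc => by
      have := zeq hc; push_cast at this; exact h3 (zeq' (by linear_combination hx - this))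
    have c3 : (n:ℤ) ∣ (b₁ + (x - a)) - b₁ := zeq' (by push_cast; linear_combination hx)
    rw [pt_left h2 hxa, pt_other h1 c1 c2, pt_left h1 hxa, pt_left h3 c3]
    ring
  · by_cases hxb1 : (n:ℤ) ∣ x - b₁
    · have hx := zeq hxb1
      have c1 : ¬ (n:ℤ) ∣ x - b₂ := fun hc => h3 (zeq' (by linear_combination zeq hc - hx))
      have c2 : ¬ (n:ℤ) ∣ (a + (x - b₁)) - b₁ := fun hc => by
        have := zeq hc; push_cast at this; exact h1 (zeq' (by linear_combination this - hx))
      have c2' : ¬ (n:ℤ) ∣ (a + (x - b₁)) - b₂ := fun hc => by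
        have := zeq hc; push_cast at this; exact h2 (zeq' (by linear_combination this - hx))
      rw [pt_other h2 hxa c1, pt_right h1 hxb1, pt_other h3 c2 c2']
    · by_cases hxb2 : (n:ℤ) ∣ x - b₂
      · have hx := zeq hxb2
        have c1 : (n:ℤ) ∣ (a + (x - b₂)) - a := zeq' (by push_cast; linear_combination hx)
        rw [pt_right h2 hxb2, pt_left h1 c1, pt_other h1 hxa hxb1, pt_right h3 hxb2]
        ring
      · rw [pt_other h2 hxa hxb2, pt_other h1 hxa hxb1, pt_other h3 hxb1 hxb2]

end Aux
namespace Aux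

variable {n : ℕ}

lemma surg3 {a b₁ b₂ b₃ : ℤ} (h1 : ¬ (n:ℤ) ∣ a - b₁) (d12 : (n:ℤ) ∣ b₁ - b₂)
    (d23 : (n:ℤ) ∣ b₂ - b₃) :
    pt n a b₁ * pt n a b₂ * pt n a b₃ = pt n a (b₁ - b₂ + b₃) := by
  have z12 := zeq (n := n) d12
  have z23 := zeq (n := n) d23
  have h2 : ¬ (n:ℤ) ∣ a - b₂ := fun hc => h1 (zeq' (by linear_combination zeq hc - z12))
  have h3 : ¬ (n:ℤ) ∣ a - b₃ := fun hc => h1 (zeq' (by linear_combination zeq hc - z12 - z23))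
  have hB : ¬ (n:ℤ) ∣ a - (b₁ - b₂ + b₃) := fun hc => by
    have := zeq hc; push_cast at this
    exact h1 (zeq' (by linear_combination this - z23))
  ext x
  simp only [Equiv.Perm.mul_apply]
  by_cases hxa : (n:ℤ) ∣ x - a
  · have hx := zeq hxa
    have c1 : (n:ℤ) ∣ (b₃ + (x - a)) - b₂ := zeq' (by push_cast; linear_combination hx - z23)
    have c2 : (n:ℤ) ∣ (a + (b₃ + (x - a) - b₂)) - a := zeq' (by push_cast; linear_combination hx - z23)
    rw [pt_left h3 hxa, pt_right h2 c1, pt_left h1 c2, pt_left hB hxa]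
    ring
  · by_cases hxb : (n:ℤ) ∣ x - b₁
    · have hx := zeq hxb
      have c0 : (n:ℤ) ∣ x - b₃ := zeq' (by linear_combination hx + z12 + z23)
      have c1 : (n:ℤ) ∣ (a + (x - b₃)) - a := zeq' (by push_cast; linear_combination hx + z12 + z23)
      have c2 : (n:ℤ) ∣ (b₂ + (a + (x - b₃) - a)) - b₁ := zeq' (by push_cast; linear_combination hx + z23)
      have cB : (n:ℤ) ∣ x - (b₁ - b₂ + b₃) := zeq' (by push_cast; linear_combination hx + z23)
      rw [pt_right h3 c0, pt_left h2 c1, pt_right h1 c2, pt_right hB cB]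
      ring
    · have hxb2 : ¬ (n:ℤ) ∣ x - b₂ := fun hc => hxb (zeq' (by linear_combination zeq hc - z12))
      have hxb3 : ¬ (n:ℤ) ∣ x - b₃ := fun hc => hxb (zeq' (by linear_combination zeq hc - z12 - z23))
      have hxB : ¬ (n:ℤ) ∣ x - (b₁ - b₂ + b₃) := fun hc => by
        have := zeq hc; push_cast at this
        exact hxb (zeq' (by linear_combination this - z23))
      rw [pt_other h3 hxa hxb3, pt_other h2 hxa hxb2, pt_other h1 hxa hxb, pt_other hB hxa hxB]

lemma surg4 {a c₀ b₁ c₂ : ℤ} (hac₀ : ¬ (n:ℤ) ∣ a - c₀) (hab : ¬ (n:ℤ) ∣ a - b₁)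
    (hc₀b : ¬ (n:ℤ) ∣ c₀ - b₁) (hd : (n:ℤ) ∣ c₂ - b₁) :
    pt n a c₀ * pt n a b₁ * pt n a c₂ =
      pt n a (c₀ + (c₂ - b₁)) * pt n c₀ b₁ * pt n c₀ c₂ := by
  have z := zeq (n := n) hd
  have hac₂ : ¬ (n:ℤ) ∣ a - c₂ := fun hc => hab (zeq' (by linear_combination zeq hc + z))
  have hA : ¬ (n:ℤ) ∣ a - (c₀ + (c₂ - b₁)) := fun hc => by
    have := zeq hc; push_cast at this
    exact hac₀ (zeq' (by linear_combination this + z))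
  have hc₀c₂ : ¬ (n:ℤ) ∣ c₀ - c₂ := fun hc => hc₀b (zeq' (by linear_combination zeq hc + z))
  ext x
  simp only [Equiv.Perm.mul_apply]
  by_cases hxa : (n:ℤ) ∣ x - a
  · have hx := zeq hxa
    have c1 : (n:ℤ) ∣ (c₂ + (x - a)) - b₁ := zeq' (by push_cast; linear_combination hx + z)
    have c2 : (n:ℤ) ∣ (a + (c₂ + (x - a) - b₁)) - a := zeq' (by push_cast; linear_combination hx + z)
    have r1 : ¬ (n:ℤ) ∣ x - c₀ := fun hc => hac₀ (zeq' (by linear_combination zeq hc - hx))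
    have r2 : ¬ (n:ℤ) ∣ x - c₂ := fun hc => hac₂ (zeq' (by linear_combination zeq hc - hx))
    have r3 : ¬ (n:ℤ) ∣ x - b₁ := fun hc => hab (zeq' (by linear_combination zeq hc - hx))
    rw [pt_left hac₂ hxa, pt_right hab c1, pt_left hac₀ c2,
      pt_other hc₀c₂ r1 r2, pt_other hc₀b r1 r3, pt_left hA hxa]
    ring
  · by_cases hxc₀ : (n:ℤ) ∣ x - c₀
    · have hx := zeq hxc₀
      have r1 : ¬ (n:ℤ) ∣ x - c₂ := fun hc => hc₀c₂ (zeq' (by linear_combination zeq hc - hx))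
      have r2 : ¬ (n:ℤ) ∣ x - b₁ := fun hc => hc₀b (zeq' (by linear_combination zeq hc - hx))
      have c1 : (n:ℤ) ∣ (c₂ + (x - c₀)) - b₁ := zeq' (by push_cast; linear_combination hx + z)
      have c2 : (n:ℤ) ∣ (c₀ + (c₂ + (x - c₀) - b₁)) - (c₀ + (c₂ - b₁)) := zeq' (by push_cast; linear_combination hx)
      rw [pt_other hac₂ hxa r1, pt_other hab hxa r2, pt_right hac₀ hxc₀,
        pt_left hc₀c₂ hxc₀, pt_right hc₀b c1, pt_right hA c2]
      ring
    · by_cases hxb : (n:ℤ) ∣ x - b₁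
      · have hx := zeq hxb
        have c0 : (n:ℤ) ∣ x - c₂ := zeq' (by linear_combination hx - z)
        have c1 : (n:ℤ) ∣ (a + (x - c₂)) - a := zeq' (by push_cast; linear_combination hx - z)
        have r1 : ¬ (n:ℤ) ∣ (b₁ + (a + (x - c₂) - a)) - a := fun hc => by
          have := zeq hc; push_cast at this
          exact hab (zeq' (by linear_combination -this + hx - z))
        have r2 : ¬ (n:ℤ) ∣ (b₁ + (a + (x - c₂) - a)) - c₀ := fun hc => by
          have := zeq hc; push_cast at this
          exact hc₀b (zeq' (by linear_combination -this + hx - z))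
        have c2 : (n:ℤ) ∣ (c₀ + (x - c₂)) - c₀ := zeq' (by push_cast; linear_combination hx - z)
        have r3 : ¬ (n:ℤ) ∣ (b₁ + (c₀ + (x - c₂) - c₀)) - a := fun hc => by
          have := zeq hc; push_cast at this
          exact hab (zeq' (by linear_combination -this + hx - z))
        have r4 : ¬ (n:ℤ) ∣ (b₁ + (c₀ + (x - c₂) - c₀)) - (c₀ + (c₂ - b₁)) := fun hc => by
          have := zeq hc; push_cast at this
          exact hc₀b (zeq' (by linear_combination -this + hx - 2*z))
        rw [pt_right hac₂ c0, pt_left hab c1, pt_other hac₀ r1 r2,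
          pt_right hc₀c₂ c0, pt_left hc₀b c2, pt_other hA r3 r4]
        ring
      · have r1 : ¬ (n:ℤ) ∣ x - c₂ := fun hc => hxb (zeq' (by linear_combination zeq hc + z))
        have r2 : ¬ (n:ℤ) ∣ x - (c₀ + (c₂ - b₁)) := fun hc => by
          have := zeq hc; push_cast at this
          exact hxc₀ (zeq' (by linear_combination this + z))
        rw [pt_other hac₂ hxa r1, pt_other hab hxa hxb, pt_other hac₀ hxa hxc₀,
          pt_other hc₀c₂ hxc₀ r1, pt_other hc₀b hxc₀ hxb, pt_other hA hxa r2]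

end Aux
namespace Aux

variable {n : ℕ}

def Fixc (n : ℕ) (γ : ℤ) (r : Equiv.Perm ℤ) : Prop :=
  ∀ x : ℤ, (n:ℤ) ∣ x - γ → r x = x

lemma fixc_one {γ : ℤ} : Fixc n γ (1 : Equiv.Perm ℤ) := fun x _ => rfl

lemma fixc_mul {γ : ℤ} {u v : Equiv.Perm ℤ} (hu : Fixc n γ u) (hv : Fixc n γ v) :
    Fixc n γ (u * v) := fun x hx => by
  simp only [Equiv.Perm.mul_apply]; rw [hv x hx, hu x hx]

lemma fixc_inv {γ : ℤ} {u : Equiv.Perm ℤ} (hu : Fixc n γ u) : Fixc n γ u⁻¹ := fun x hx => by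
  apply u.injective; rw [(show ∀ y, u (u⁻¹ y) = y from fun y => u.apply_symm_apply y), hu x hx]

lemma fixc_prod {γ : ℤ} {L : List (Equiv.Perm ℤ)} (h : ∀ r ∈ L, Fixc n γ r) :
    Fixc n γ L.prod := by
  induction L with
  | nil => exact fixc_one
  | cons a l ih =>
    rw [List.prod_cons]
    exact fixc_mul (h a List.mem_cons_self) (ih fun r hr => h r (List.mem_cons_of_mem a hr))

lemma fixc_pt_iff {γ a b : ℤ} (h : ¬ (n:ℤ) ∣ a - b) :
    Fixc n γ (pt n a b) ↔ (¬ (n:ℤ) ∣ a - γ ∧ ¬ (n:ℤ) ∣ b - γ) := by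
  constructor
  · intro hf
    constructor
    · intro hc
      have h1 : pt n a b a = a := hf a (by rwa [show a - γ = a - γ by ring])
      rw [pt_left h (by simp)] at h1
      exact h (by rw [show a - b = -(b + (a - a) - a) by ring, h1]; ring_nf; exact dvd_zero _)
    · intro hc
      have h1 : pt n a b b = b := hf b hc
      rw [pt_right h (by simp)] at h1
      exact h (by rw [show a - b = a + (b - b) - b by ring, h1]; ring_nf; exact dvd_zero _)
  · rintro ⟨h1, h2⟩ x hx
    have hx1 : ¬ (n:ℤ) ∣ x - a := fun hc => h1 (zeq' (by linear_combination - zeq hc + zeq hx))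
    have hx2 : ¬ (n:ℤ) ∣ x - b := fun hc => h2 (zeq' (by linear_combination - zeq hc + zeq hx))
    exact pt_other h hx1 hx2

lemma fixc_class_iff {γ : ℤ} {u : Equiv.Perm ℤ} (hu : Fixc n γ u) {x : ℤ} :
    (n:ℤ) ∣ u x - γ ↔ (n:ℤ) ∣ x - γ := by
  constructor
  · intro h
    have h2 : u (u x) = u x := hu (u x) h
    rwa [u.injective h2] at h
  · intro h
    rwa [hu x h]

lemma refl_periodic {r : Equiv.Perm ℤ} (h : IsReflection n r) : IsPeriodic n r := by
  obtain ⟨a, b, hab, rfl⟩ := isReflection_iff.mp h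
  exact pt_periodic

/-- every reflection not fixing class `γ` has the form `pt n γ c`. -/
lemma toucher_form {γ : ℤ} {r : Equiv.Perm ℤ} (hr : IsReflection n r)
    (ht : ¬ Fixc n γ r) : ∃ c : ℤ, ¬ (n:ℤ) ∣ γ - c ∧ r = pt n γ c := by
  obtain ⟨a, b, hab, rfl⟩ := isReflection_iff.mp hr
  rw [fixc_pt_iff hab] at ht
  push_neg at ht
  by_cases h1 : (n:ℤ) ∣ a - γ
  · have hgb : ¬ (n:ℤ) ∣ γ - b := fun hc => hab (zeq' (by linear_combination zeq h1 + zeq hc))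
    refine ⟨b - (a - γ), fun hc => ?_, ?_⟩
    · exact hgb (zeq' (by have := zeq hc; push_cast at this; linear_combination this - zeq h1))
    · rw [show pt n a b = pt n (γ + (a - γ)) b by rw [show γ + (a - γ) = a by ring]]
      exact pt_shiftl hgb h1
  · have h2 := ht h1
    have hba : ¬ (n:ℤ) ∣ b - a := fun hc => hab (by rw [show a - b = -(b - a) by ring]; exact hc.neg_right)
    have hga : ¬ (n:ℤ) ∣ γ - a := fun hc => h1 (by rw [show a - γ = -(γ - a) by ring]; exact hc.neg_right)
    refine ⟨a - (b - γ), fun hc => ?_, ?_⟩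
    · exact hga (zeq' (by have := zeq hc; push_cast at this; linear_combination this - zeq h2))
    · rw [pt_symm hab, show pt n b a = pt n (γ + (b - γ)) a by rw [show γ + (b - γ) = b by ring]]
      exact pt_shiftl hga h2

/-- rightmost element failing `p`. -/
lemma exists_last {α : Type*} {p : α → Prop} :
    ∀ {L : List α}, (¬ ∀ r ∈ L, p r) →
      ∃ (L₁ : List α) (t : α) (L₂ : List α),
        L = L₁ ++ t :: L₂ ∧ ¬ p t ∧ ∀ r ∈ L₂, p r := by
  intro L
  induction L with
  | nil => intro h; exact absurd (by simp) h
  | cons a l ih =>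
    intro h
    by_cases hl : ∀ r ∈ l, p r
    · refine ⟨[], a, l, by simp, fun hpa => h ?_, hl⟩
      intro r hr
      rcases List.mem_cons.mp hr with h1 | h2
      · rwa [h1]
      · exact hl r h2
    · obtain ⟨L₁, t, L₂, rfl, ht, h₂⟩ := ih hl
      exact ⟨a :: L₁, t, L₂, by simp, ht, h₂⟩

end Aux
namespace Aux

open Classical in
/-- One class can be cleaned from a reflection factorization. -/
lemma clean_one {n : ℕ} (γ : ℤ) :
    ∀ (k : ℕ) (L : List (Equiv.Perm ℤ)),
      (L.countP (fun r => !decide (Fixc n γ r))) ≤ k →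
      (∀ r ∈ L, IsReflection n r) →
      Fixc n γ L.prod →
      ∃ L' : List (Equiv.Perm ℤ),
        L'.length ≤ L.length ∧ (∀ r ∈ L', IsReflection n r) ∧ L'.prod = L.prod ∧
        (∀ r ∈ L', Fixc n γ r) ∧
        (∀ δ : ℤ, (∀ r ∈ L, Fixc n δ r) → ∀ r ∈ L', Fixc n δ r) := by
  intro k
  induction k with
  | zero =>
    intro L hc hrefl hfix
    refine ⟨L, le_refl _, hrefl, rfl, fun r hr => ?_, fun δ h => h⟩
    have h0 : L.countP (fun r => !decide (Fixc n γ r)) = 0 := Nat.le_zero.mp hc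
    have := List.countP_eq_zero.mp h0 r hr
    simpa using this
  | succ k ih =>
    intro L hc hrefl hfix
    by_cases hall : ∀ r ∈ L, Fixc n γ r
    · exact ⟨L, le_refl _, hrefl, rfl, hall, fun δ h => h⟩
    -- rightmost toucher t
    obtain ⟨L₁, t, R, rfl, ht, hR⟩ := exists_last (p := fun r => Fixc n γ r) hall
    have htrefl : IsReflection n t := hrefl t (by simp)
    obtain ⟨b, hgb, rfl⟩ := toucher_form htrefl ht
    by_cases hall1 : ∀ r ∈ L₁, Fixc n γ r
    · -- only one toucher: contradiction
      exfalso
      have hPr : Fixc n γ R.prod := fixc_prod hR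
      have hP1 : Fixc n γ L₁.prod := fixc_prod hall1
      have hγ : (n:ℤ) ∣ γ - γ := by simp
      have e1 : (L₁ ++ pt n γ b :: R).prod γ = L₁.prod (pt n γ b γ) := by
        rw [List.prod_append, List.prod_cons]
        simp only [Equiv.Perm.mul_apply]
        rw [hPr γ hγ]
      have e2 : pt n γ b γ = b + (γ - γ) := pt_left hgb hγ
      have e3 : b + (γ - γ) = b := by ring
      have hfb : ¬ (n:ℤ) ∣ b - γ := fun hcc => hgb (by
        rw [show γ - b = -(b - γ) by ring]; exact hcc.neg_right)
      have e4 := hfix γ hγ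
      rw [e1, e2, e3] at e4
      -- L₁.prod b = γ, but L₁.prod preserves class membership
      have : (n:ℤ) ∣ L₁.prod b - γ := by rw [e4]; simp
      rw [fixc_class_iff hP1] at this
      exact hfb this
    · -- second rightmost toucher t'
      obtain ⟨L₂, t', M, rfl, ht', hM⟩ := exists_last (p := fun r => Fixc n γ r) hall1
      have ht'refl : IsReflection n t' := hrefl t' (by simp)
      obtain ⟨b₁, hgb₁, rfl⟩ := toucher_form ht'refl ht'
      -- conjugate t over M
      have hMrefl : ∀ r ∈ M, IsReflection n r := fun r hr => hrefl r (by simp [hr])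
      have hMper : IsPeriodic n M.prod := periodic_prod fun r hr => refl_periodic (hMrefl r hr)
      have hMfix : Fixc n γ M.prod := fixc_prod hM
      set c₂ : ℤ := M.prod b with hc₂def
      have hgc₂ : ¬ (n:ℤ) ∣ γ - c₂ := by
        intro hcc
        apply hgb
        have e : γ - c₂ = -(M.prod b - γ) := by ring
        rw [e] at hcc
        have := (fixc_class_iff hMfix (x := b)).mp (dvd_neg.mp hcc)
        rw [show γ - b = -(b - γ) by ring]
        exact this.neg_right
      have hsconj : M.prod * pt n γ b * (M.prod)⁻¹ = pt n γ c₂ := by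
        have := pt_conj hgb hMper
        rwa [hMfix γ (by simp)] at this
      -- base product rearrangement
      have hprod0 : (L₂ ++ pt n γ b₁ :: M ++ pt n γ b :: R).prod
          = L₂.prod * (pt n γ b₁ * pt n γ c₂) * (M.prod * R.prod) := by
        rw [← hsconj]
        simp only [List.prod_append, List.prod_cons]
        group
      -- invariant helper for s-like conjugates
      have fixc_conj : ∀ δ : ℤ, Fixc n δ M.prod → Fixc n δ (pt n γ b) →
          Fixc n δ (pt n γ c₂) := by
        intro δ h1 h2
        rw [← hsconj]
        exact fixc_mul (fixc_mul h1 h2) (fixc_inv h1)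
      -- count bookkeeping facts
      have hcntM : M.countP (fun r => !decide (Fixc n γ r)) = 0 :=
        List.countP_eq_zero.mpr (fun r hr => by simp [hM r hr])
      have hcntR : R.countP (fun r => !decide (Fixc n γ r)) = 0 :=
        List.countP_eq_zero.mpr (fun r hr => by simp [hR r hr])
      have hcntL : (L₂ ++ pt n γ b₁ :: M ++ pt n γ b :: R).countP
          (fun r => !decide (Fixc n γ r))
          = L₂.countP (fun r => !decide (Fixc n γ r)) + 2 := by
        simp [List.countP_append, List.countP_cons, hcntM, hcntR, ht, ht']
      have hcntL₂ : L₂.countP (fun r => !decide (Fixc n γ r)) + 2 ≤ k + 1 := by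
        rw [← hcntL]; exact hc
      have hb₁γ : ¬ (n:ℤ) ∣ b₁ - γ := fun hcc => hgb₁ (by
        rw [show γ - b₁ = -(b₁ - γ) by ring]; exact hcc.neg_right)
      have hc₂γ : ¬ (n:ℤ) ∣ c₂ - γ := fun hcc => hgc₂ (by
        rw [show γ - c₂ = -(c₂ - γ) by ring]; exact hcc.neg_right)
      have hγγ : ¬ (n:ℤ) ∣ γ - γ → False := fun hcc => hcc (by simp)
      -- the invariant giver: Fixc δ for everything old, at any δ with all-fix
      by_cases hbc : (n:ℤ) ∣ b₁ - c₂
      · -- same class case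
        by_cases hbceq : b₁ = c₂
        · -- cancellation
          have hcancel : pt n γ b₁ * pt n γ c₂ = 1 := by
            rw [hbceq]; exact pt_mul_self hgc₂
          set Lnew := L₂ ++ (M ++ R) with hLnew
          have h3 : Lnew.prod = (L₂ ++ pt n γ b₁ :: M ++ pt n γ b :: R).prod := by
            rw [hprod0, hcancel]
            simp only [hLnew, List.prod_append]
            group
          have h1 : Lnew.countP (fun r => !decide (Fixc n γ r)) ≤ k := by
            simp only [hLnew, List.countP_append, hcntM, hcntR]
            omega
          have h2 : ∀ r ∈ Lnew, IsReflection n r := by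
            intro r hr
            simp only [hLnew, List.mem_append] at hr
            rcases hr with h | h | h
            · exact hrefl r (by simp [h])
            · exact hrefl r (by simp [h])
            · exact hrefl r (by simp [h])
          obtain ⟨L', hl1, hl2, hl3, hl4, hl5⟩ := ih Lnew h1 h2 (by rw [h3]; exact hfix)
          refine ⟨L', ?_, hl2, by rw [hl3, h3], hl4, ?_⟩
          · calc L'.length ≤ Lnew.length := hl1
              _ ≤ _ := by simp [hLnew]; omega
          · intro δ hδ
            refine hl5 δ ?_
            intro r hr
            simp only [hLnew, List.mem_append] at hr
            rcases hr with h | h | h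
            · exact hδ r (by simp [h])
            · exact hδ r (by simp [h])
            · exact hδ r (by simp [h])
        · -- translation case : need a third toucher
          by_cases hall2 : ∀ r ∈ L₂, Fixc n γ r
          · exfalso
            have hP2 : Fixc n γ L₂.prod := fixc_prod hall2
            have e0 := hfix γ (by simp)
            rw [hprod0] at e0
            simp only [Equiv.Perm.mul_apply] at e0
            rw [fixc_prod hR γ (by simp), hMfix γ (by simp), pt_left hgc₂ (by simp),
              pt_right hgb₁ (by rw [show c₂ + (γ - γ) - b₁ = -(b₁ - c₂) by ring]; exact hbc.neg_right),
              hP2 _ (by rw [show γ + (c₂ + (γ - γ) - b₁) - γ = -(b₁ - c₂) by ring]; exact hbc.neg_right)] at e0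
            apply hbceq
            omega
          · obtain ⟨L₃, t₀, M₂, rfl, ht₀, hM₂⟩ := exists_last (p := fun r => Fixc n γ r) hall2
            obtain ⟨b₀, hgb₀, rfl⟩ := toucher_form (hrefl t₀ (by simp)) ht₀
            have hM₂refl : ∀ r ∈ M₂, IsReflection n r := fun r hr => hrefl r (by simp [hr])
            have hM₂per : IsPeriodic n (M₂.prod)⁻¹ :=
              periodic_inv (periodic_prod fun r hr => refl_periodic (hM₂refl r hr))
            have hM₂fix : Fixc n γ (M₂.prod)⁻¹ := fixc_inv (fixc_prod hM₂)
            set c₀ : ℤ := (M₂.prod)⁻¹ b₀ with hc₀def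
            have hgc₀ : ¬ (n:ℤ) ∣ γ - c₀ := by
              intro hcc
              apply hgb₀
              have e : γ - c₀ = -((M₂.prod)⁻¹ b₀ - γ) := by ring
              rw [e] at hcc
              have := (fixc_class_iff hM₂fix (x := b₀)).mp (dvd_neg.mp hcc)
              rw [show γ - b₀ = -(b₀ - γ) by ring]
              exact this.neg_right
            have hs₀conj : (M₂.prod)⁻¹ * pt n γ b₀ * M₂.prod = pt n γ c₀ := by
              have := pt_conj hgb₀ hM₂per
              rwa [hM₂fix γ (by simp), inv_inv] at this
            have hprod1 : ((L₃ ++ pt n γ b₀ :: M₂) ++ pt n γ b₁ :: M ++ pt n γ b :: R).prod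
                = L₃.prod * M₂.prod * (pt n γ c₀ * pt n γ b₁ * pt n γ c₂)
                  * (M.prod * R.prod) := by
              rw [hprod0, ← hs₀conj]
              simp only [List.prod_append, List.prod_cons]
              group
            have hcntM₂ : M₂.countP (fun r => !decide (Fixc n γ r)) = 0 :=
              List.countP_eq_zero.mpr (fun r hr => by simp [hM₂ r hr])
            have hcntL₃ : L₃.countP (fun r => !decide (Fixc n γ r)) + 3 ≤ k + 1 := by
              have : (L₃ ++ pt n γ b₀ :: M₂).countP (fun r => !decide (Fixc n γ r))
                  = L₃.countP (fun r => !decide (Fixc n γ r)) + 1 := by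
                simp [List.countP_append, List.countP_cons, ht₀, hcntM₂]
              omega
            by_cases hc₀b : (n:ℤ) ∣ c₀ - b₁
            · -- all three in same class : collapse to one reflection
              set q := pt n γ (c₀ - b₁ + c₂) with hq
              have hgq : ¬ (n:ℤ) ∣ γ - (c₀ - b₁ + c₂) := fun hcc => hgc₀ (by
                have := zeq hcc; push_cast at this
                exact zeq' (by linear_combination this - zeq hbc))
              have hsurg := surg3 (n := n) hgc₀ hc₀b hbc
              set Lnew := L₃ ++ M₂ ++ q :: (M ++ R) with hLnew
              have h3 : Lnew.prod = ((L₃ ++ pt n γ b₀ :: M₂) ++ pt n γ b₁ :: M ++ pt n γ b :: R).prod := by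
                rw [hprod1]
                simp only [hLnew, hq, List.prod_append, List.prod_cons]
                rw [← hsurg]
                group
              have hqt : ¬ Fixc n γ q := fun hcc => ((fixc_pt_iff hgq).mp hcc).1 (by simp)
              have h1 : Lnew.countP (fun r => !decide (Fixc n γ r)) ≤ k := by
                simp only [hLnew, List.countP_append, List.countP_cons, hcntM₂, hcntM, hcntR]
                simp [hqt]
                omega
              have h2 : ∀ r ∈ Lnew, IsReflection n r := by
                intro r hr
                simp only [hLnew, List.mem_append, List.mem_cons] at hr
                rcases hr with (h | h) | h | (h | h)
                · exact hrefl r (by simp [h])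
                · exact hrefl r (by simp [h])
                · rw [h, hq]; exact pt_isReflection hgq
                · exact hrefl r (by simp [h])
                · exact hrefl r (by simp [h])
              obtain ⟨L', hl1, hl2, hl3, hl4, hl5⟩ := ih Lnew h1 h2 (by rw [h3]; exact hfix)
              refine ⟨L', ?_, hl2, by rw [hl3, h3], hl4, ?_⟩
              · calc L'.length ≤ Lnew.length := hl1
                  _ ≤ _ := by simp [hLnew]; omega
              · intro δ hδ
                refine hl5 δ ?_
                intro r hr
                have ht₀δ : Fixc n δ (pt n γ b₀) := hδ _ (by simp)
                have ht'δ : Fixc n δ (pt n γ b₁) := hδ _ (by simp)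
                have htδ : Fixc n δ (pt n γ b) := hδ _ (by simp)
                have hM₂δ : Fixc n δ (M₂.prod)⁻¹ :=
                  fixc_inv (fixc_prod (fun r hr => hδ r (by simp [hr])))
                have hs₀δ : Fixc n δ (pt n γ c₀) := by
                  rw [← hs₀conj]
                  exact fixc_mul (fixc_mul hM₂δ ht₀δ) (fixc_inv hM₂δ)
                have hqδ : Fixc n δ q := by
                  rw [hq]
                  have h01 := (fixc_pt_iff hgb₁).mp ht'δ
                  have h02 := (fixc_pt_iff hgc₀).mp hs₀δ
                  refine (fixc_pt_iff hgq).mpr ⟨h01.1, fun hcc => h02.2 ?_⟩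
                  have := zeq hcc; push_cast at this
                  exact zeq' (by linear_combination this + zeq hbc)
                simp only [hLnew, List.mem_append, List.mem_cons] at hr
                rcases hr with (h | h) | h | (h | h)
                · exact hδ r (by simp [h])
                · exact hδ r (by simp [h])
                · rw [h]; exact hqδ
                · exact hδ r (by simp [h])
                · exact hδ r (by simp [h])
            · -- mixed triple : surg4
              have hd : (n:ℤ) ∣ c₂ - b₁ := by
                rw [show c₂ - b₁ = -(b₁ - c₂) by ring]; exact hbc.neg_right
              have hgA : ¬ (n:ℤ) ∣ γ - (c₀ + (c₂ - b₁)) := fun hcc => hgc₀ (by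
                have := zeq hcc; push_cast at this
                exact zeq' (by linear_combination this + zeq hd))
              have hc₀c₂ : ¬ (n:ℤ) ∣ c₀ - c₂ := fun hcc =>
                hc₀b (zeq' (by linear_combination zeq hcc + zeq hd))
              have hc₀γ : ¬ (n:ℤ) ∣ c₀ - γ := fun hcc => hgc₀ (by
                rw [show γ - c₀ = -(c₀ - γ) by ring]; exact hcc.neg_right)
              have hsurg := surg4 (n := n) hgc₀ hgb₁ hc₀b hd
              have hfixB : Fixc n γ (pt n c₀ b₁) := (fixc_pt_iff hc₀b).mpr ⟨hc₀γ, hb₁γ⟩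
              have hfixC : Fixc n γ (pt n c₀ c₂) := (fixc_pt_iff hc₀c₂).mpr ⟨hc₀γ, hc₂γ⟩
              have hrAt : ¬ Fixc n γ (pt n γ (c₀ + (c₂ - b₁))) := fun hcc =>
                ((fixc_pt_iff hgA).mp hcc).1 (by simp)
              set Lnew := L₃ ++ M₂ ++ pt n γ (c₀ + (c₂ - b₁)) :: pt n c₀ b₁ :: pt n c₀ c₂ :: (M ++ R) with hLnew
              have h3 : Lnew.prod = ((L₃ ++ pt n γ b₀ :: M₂) ++ pt n γ b₁ :: M ++ pt n γ b :: R).prod := by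
                rw [hprod1, hsurg]
                simp only [hLnew, List.prod_append, List.prod_cons]
                group
              have h1 : Lnew.countP (fun r => !decide (Fixc n γ r)) ≤ k := by
                simp only [hLnew, List.countP_append, List.countP_cons, hcntM₂, hcntM, hcntR]
                simp [hrAt, hfixB, hfixC]
                omega
              have h2 : ∀ r ∈ Lnew, IsReflection n r := by
                intro r hr
                simp only [hLnew, List.mem_append, List.mem_cons] at hr
                rcases hr with (h | h) | h | h | h | (h | h)
                · exact hrefl r (by simp [h])
                · exact hrefl r (by simp [h])
                · rw [h]; exact pt_isReflection hgA
                · rw [h]; exact pt_isReflection hc₀b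
                · rw [h]; exact pt_isReflection hc₀c₂
                · exact hrefl r (by simp [h])
                · exact hrefl r (by simp [h])
              obtain ⟨L', hl1, hl2, hl3, hl4, hl5⟩ := ih Lnew h1 h2 (by rw [h3]; exact hfix)
              refine ⟨L', ?_, hl2, by rw [hl3, h3], hl4, ?_⟩
              · calc L'.length ≤ Lnew.length := hl1
                  _ ≤ _ := by simp [hLnew]; omega
              · intro δ hδ
                refine hl5 δ ?_
                intro r hr
                have ht₀δ : Fixc n δ (pt n γ b₀) := hδ _ (by simp)
                have ht'δ : Fixc n δ (pt n γ b₁) := hδ _ (by simp)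
                have htδ : Fixc n δ (pt n γ b) := hδ _ (by simp)
                have hMδ : Fixc n δ M.prod := fixc_prod (fun r hr => hδ r (by simp [hr]))
                have hM₂δ : Fixc n δ (M₂.prod)⁻¹ :=
                  fixc_inv (fixc_prod (fun r hr => hδ r (by simp [hr])))
                have hs₀δ : Fixc n δ (pt n γ c₀) := by
                  rw [← hs₀conj]
                  exact fixc_mul (fixc_mul hM₂δ ht₀δ) (fixc_inv hM₂δ)
                have hsδ : Fixc n δ (pt n γ c₂) := fixc_conj δ hMδ htδ
                have h01 := (fixc_pt_iff hgb₁).mp ht'δ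
                have h02 := (fixc_pt_iff hgc₀).mp hs₀δ
                have h03 := (fixc_pt_iff hgc₂).mp hsδ
                have hrAδ : Fixc n δ (pt n γ (c₀ + (c₂ - b₁))) := by
                  refine (fixc_pt_iff hgA).mpr ⟨h01.1, fun hcc => h02.2 ?_⟩
                  have := zeq hcc; push_cast at this
                  exact zeq' (by linear_combination this - zeq hd)
                have hrBδ : Fixc n δ (pt n c₀ b₁) :=
                  (fixc_pt_iff hc₀b).mpr ⟨h02.2, h01.2⟩
                have hrCδ : Fixc n δ (pt n c₀ c₂) :=
                  (fixc_pt_iff hc₀c₂).mpr ⟨h02.2, h03.2⟩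
                simp only [hLnew, List.mem_append, List.mem_cons] at hr
                rcases hr with (h | h) | h | h | h | (h | h)
                · exact hδ r (by simp [h])
                · exact hδ r (by simp [h])
                · rw [h]; exact hrAδ
                · rw [h]; exact hrBδ
                · rw [h]; exact hrCδ
                · exact hδ r (by simp [h])
                · exact hδ r (by simp [h])
      · -- different classes : surg2
        have hsurg := surg2 (n := n) hgb₁ hgc₂ hbc
        have hfixBC : Fixc n γ (pt n b₁ c₂) := (fixc_pt_iff hbc).mpr ⟨hb₁γ, hc₂γ⟩
        set Lnew := L₂ ++ pt n b₁ c₂ :: pt n γ b₁ :: (M ++ R) with hLnew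
        have h3 : Lnew.prod = (L₂ ++ pt n γ b₁ :: M ++ pt n γ b :: R).prod := by
          rw [hprod0, hsurg]
          simp only [hLnew, List.prod_append, List.prod_cons]
          group
        have h1 : Lnew.countP (fun r => !decide (Fixc n γ r)) ≤ k := by
          simp only [hLnew, List.countP_append, List.countP_cons, hcntM, hcntR]
          simp [hfixBC, ht']
          omega
        have h2 : ∀ r ∈ Lnew, IsReflection n r := by
          intro r hr
          simp only [hLnew, List.mem_append, List.mem_cons] at hr
          rcases hr with h | h | h | (h | h)
          · exact hrefl r (by simp [h])
          · rw [h]; exact pt_isReflection hbc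
          · rw [h]; exact pt_isReflection hgb₁
          · exact hrefl r (by simp [h])
          · exact hrefl r (by simp [h])
        obtain ⟨L', hl1, hl2, hl3, hl4, hl5⟩ := ih Lnew h1 h2 (by rw [h3]; exact hfix)
        refine ⟨L', ?_, hl2, by rw [hl3, h3], hl4, ?_⟩
        · calc L'.length ≤ Lnew.length := hl1
            _ ≤ _ := by simp [hLnew]
        · intro δ hδ
          refine hl5 δ ?_
          intro r hr
          have ht'δ : Fixc n δ (pt n γ b₁) := hδ _ (by simp)
          have htδ : Fixc n δ (pt n γ b) := hδ _ (by simp)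
          have hMδ : Fixc n δ M.prod := fixc_prod (fun r hr => hδ r (by simp [hr]))
          have hsδ : Fixc n δ (pt n γ c₂) := fixc_conj δ hMδ htδ
          have h01 := (fixc_pt_iff hgb₁).mp ht'δ
          have h03 := (fixc_pt_iff hgc₂).mp hsδ
          simp only [hLnew, List.mem_append, List.mem_cons] at hr
          rcases hr with h | h | h | (h | h)
          · exact hδ r (by simp [h])
          · rw [h]; exact (fixc_pt_iff hbc).mpr ⟨h01.2, h03.2⟩
          · rw [h]; exact ht'δ
          · exact hδ r (by simp [h])
          · exact hδ r (by simp [h])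

end Aux
namespace Aux

variable {n : ℕ}

lemma mem_iff_of_dvd {T : Set ℤ} (hT : ∀ x : ℤ, x ∈ T ↔ x + (n:ℤ) ∈ T)
    {x y : ℤ} (h : (n:ℤ) ∣ x - y) : (x ∈ T ↔ y ∈ T) := by
  have key : ∀ (k : ℤ) (z : ℤ), z + k * n ∈ T ↔ z ∈ T := by
    intro k
    induction k using Int.induction_on with
    | zero => simp
    | succ i ih =>
      intro z
      rw [show z + (i + 1 : ℤ) * n = (z + i * n) + n by ring, ← hT, ih]
    | pred i ih =>
      intro z
      have h1 := ih (z - n)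
      rw [show z - (n:ℤ) + (-i) * n = z + (-i - 1) * n by ring] at h1
      rw [h1, hT (z - n), sub_add_cancel]
  obtain ⟨k, hk⟩ := h
  have hx : x = y + k * n := by rw [show k * (n:ℤ) = n * k by ring, ← hk]; ring
  rw [hx, key k y]

lemma resid_exists (hn : 0 < n) (x : ℤ) :
    ∃ i : ℕ, i < n ∧ (n:ℤ) ∣ x - (i:ℤ) := by
  refine ⟨(x % (n:ℤ)).toNat, ?_, ?_⟩
  · have h1 : 0 ≤ x % (n:ℤ) := Int.emod_nonneg x (by exact_mod_cast hn.ne')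
    have h2 : x % (n:ℤ) < n := Int.emod_lt_of_pos x (by exact_mod_cast hn)
    omega
  · have h1 : 0 ≤ x % (n:ℤ) := Int.emod_nonneg x (by exact_mod_cast hn.ne')
    rw [Int.toNat_of_nonneg h1, Int.emod_def]
    exact ⟨x / n, by ring⟩

open Classical in
lemma clean_all (hn : 0 < n) (T : Set ℤ) (hT : ∀ x : ℤ, x ∈ T ↔ x + (n:ℤ) ∈ T) :
    ∀ (m : ℕ) (L : List (Equiv.Perm ℤ)),
      ((Finset.range n).filter
        (fun i : ℕ => ((i:ℤ) ∉ T) ∧ ¬ ∀ r ∈ L, Fixc n (i:ℤ) r)).card ≤ m →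
      (∀ r ∈ L, IsReflection n r) →
      (∀ x ∉ T, L.prod x = x) →
      ∃ L' : List (Equiv.Perm ℤ),
        L'.length ≤ L.length ∧ (∀ r ∈ L', IsReflection n r) ∧ L'.prod = L.prod ∧
        (∀ r ∈ L', ∀ x ∉ T, r x = x) := by
  intro m
  induction m with
  | zero =>
    intro L hcard hrefl hsupp
    refine ⟨L, le_refl _, hrefl, rfl, fun r hr x hx => ?_⟩
    have hc0 : ((Finset.range n).filter
        (fun i : ℕ => ((i:ℤ) ∉ T) ∧ ¬ ∀ r ∈ L, Fixc n (i:ℤ) r)) = ∅ :=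
      Finset.card_eq_zero.mp (Nat.le_zero.mp hcard)
    obtain ⟨i, hin, hdvd⟩ := resid_exists hn x
    have hiT : (i:ℤ) ∉ T := fun hmem => hx ((mem_iff_of_dvd hT hdvd).mpr hmem)
    have hnotmem : i ∉ (Finset.range n).filter
        (fun i : ℕ => ((i:ℤ) ∉ T) ∧ ¬ ∀ r ∈ L, Fixc n (i:ℤ) r) := by
      rw [hc0]; exact Finset.notMem_empty i
    rw [Finset.mem_filter] at hnotmem
    push_neg at hnotmem
    have hfix := hnotmem (Finset.mem_range.mpr hin) hiT
    exact hfix r hr x hdvd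
  | succ m ih =>
    intro L hcard hrefl hsupp
    by_cases hle : ((Finset.range n).filter
        (fun i : ℕ => ((i:ℤ) ∉ T) ∧ ¬ ∀ r ∈ L, Fixc n (i:ℤ) r)).card ≤ m
    · exact ih L hle hrefl hsupp
    · obtain ⟨i, hi⟩ := Finset.card_pos.mp (show 0 < ((Finset.range n).filter
          (fun j : ℕ => ((j:ℤ) ∉ T) ∧ ¬ ∀ r ∈ L, Fixc n (j:ℤ) r)).card by omega)
      rw [Finset.mem_filter] at hi
      obtain ⟨hirange, hiT, hitouch⟩ := hi
      have hfixγ : Fixc n (i:ℤ) L.prod := fun x hdvd =>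
        hsupp x (fun hmem => hiT ((mem_iff_of_dvd hT hdvd).mp hmem))
      obtain ⟨L₁, hlen1, hrefl1, hprod1, hfixall, hinv⟩ :=
        clean_one (n := n) (i:ℤ) (L.countP (fun r => !decide (Fixc n (i:ℤ) r))) L
          (le_refl _) hrefl hfixγ
      have hsub : ((Finset.range n).filter
          (fun j : ℕ => ((j:ℤ) ∉ T) ∧ ¬ ∀ r ∈ L₁, Fixc n (j:ℤ) r)) ⊆
          ((Finset.range n).filter
          (fun j : ℕ => ((j:ℤ) ∉ T) ∧ ¬ ∀ r ∈ L, Fixc n (j:ℤ) r)).erase i := by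
        intro j hj
        rw [Finset.mem_filter] at hj
        obtain ⟨hj1, hjT, hjtouch⟩ := hj
        rw [Finset.mem_erase, Finset.mem_filter]
        refine ⟨?_, hj1, hjT, fun hall => hjtouch (fun r hr => hinv (j:ℤ) hall r hr)⟩
        intro hji
        apply hjtouch
        intro r hr
        rw [hji]
        exact hfixall r hr
      have hcard1 : ((Finset.range n).filter
          (fun j : ℕ => ((j:ℤ) ∉ T) ∧ ¬ ∀ r ∈ L₁, Fixc n (j:ℤ) r)).card ≤ m := by
        have h1 := Finset.card_le_card hsub
        rw [Finset.card_erase_of_mem (Finset.mem_filter.mpr ⟨hirange, hiT, hitouch⟩)] at h1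
        omega
      obtain ⟨L', hl1, hl2, hl3, hl4⟩ := ih L₁ hcard1 hrefl1
        (fun x hx => by rw [hprod1]; exact hsupp x hx)
      exact ⟨L', le_trans hl1 hlen1, hl2, by rw [hl3, hprod1], hl4⟩

end Aux

theorem statement2 (n : ℕ) (hn : 2 ≤ n) (T : Set ℤ)
    (hT : ∀ x : ℤ, x ∈ T ↔ x + (n : ℤ) ∈ T)
    (w : Equiv.Perm ℤ) (hw : InAffineW n w) (hwT : ∀ x ∉ T, w x = x) :
    sInf {m | ∃ L : List (Equiv.Perm ℤ), L.length = m ∧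
        (∀ r ∈ L, IsReflection n r ∧ ∀ x ∉ T, r x = x) ∧ L.prod = w}
      = reflLength n w := by
  classical
  have hn0 : 0 < n := by omega
  simp only [reflLength]
  set A := {m | ∃ L : List (Equiv.Perm ℤ), L.length = m ∧
      (∀ r ∈ L, IsReflection n r ∧ ∀ x ∉ T, r x = x) ∧ L.prod = w} with hA
  set B := {m | ∃ L : List (Equiv.Perm ℤ), L.length = m ∧
      (∀ r ∈ L, IsReflection n r) ∧ L.prod = w} with hB
  have hAB : A ⊆ B := by
    rintro m ⟨L, h1, h2, h3⟩
    exact ⟨L, h1, fun r hr => (h2 r hr).1, h3⟩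
  by_cases hBne : B.Nonempty
  · obtain ⟨L, hlen, hrefl, hprod⟩ := Nat.sInf_mem hBne
    obtain ⟨L', hl1, hl2, hl3, hl4⟩ := Aux.clean_all hn0 T hT n L
      (le_trans (Finset.card_filter_le _ _) (by simp))
      hrefl (fun x hx => by rw [hprod]; exact hwT x hx)
    have hAmem : L'.length ∈ A := ⟨L', rfl, fun r hr => ⟨hl2 r hr, hl4 r hr⟩, by rw [hl3, hprod]⟩
    apply le_antisymm
    · calc sInf A ≤ L'.length := Nat.sInf_le hAmem
        _ ≤ L.length := hl1
        _ = sInf B := hlen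
    · exact Nat.sInf_le (hAB (Nat.sInf_mem ⟨L'.length, hAmem⟩))
  · have hBe : B = ∅ := Set.not_nonempty_iff_eq_empty.mp hBne
    have hAe : A = ∅ := Set.eq_empty_of_subset_empty (hBe ▸ hAB)
    rw [hAe, hBe]
end

section
/- Let c be a Coxeter element of W. Then there exists a partition {1,…,n} = {a_1,…,a_s} ⊔ {α_1,…,α_t} into two nonempty parts, with a_1 < a_2 < … < a_s and α_1 < α_2 < … < α_t, such that c = (a_1,a_2,…,a_s)_{[1]} ∘ (α_t,α_{t−1},…,α_1)_{[−1]}. -/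
/-- `c` is a Coxeter element of `W` : a product of the Coxeter generators
`s_1, …, s_n` (where `s_i = (i, i+1)`), each occurring exactly once, in some order. -/
def IsCoxeter (n : ℕ) (c : Equiv.Perm ℤ) : Prop :=
  ∃ s : Fin n → Equiv.Perm ℤ,
    (∀ i : Fin n, IsTransposition n ((i : ℤ) + 1) ((i : ℤ) + 2) (s i)) ∧
    ∃ e : Equiv.Perm (Fin n), c = (List.ofFn (fun j => s (e j))).prod


open Classical in
noncomputable def nextIn (S : Set ℤ) (x : ℤ) : ℤ :=
  if h : ∃ m : ℕ, x + 1 + (m : ℤ) ∈ S then x + 1 + (Nat.find h : ℤ) else x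

open Classical in
noncomputable def prevIn (S : Set ℤ) (x : ℤ) : ℤ :=
  if h : ∃ m : ℕ, x - 1 - (m : ℤ) ∈ S then x - 1 - (Nat.find h : ℤ) else x

lemma nextIn_spec (S : Set ℤ) (x : ℤ) (h : ∃ y, x < y ∧ y ∈ S) :
    nextIn S x ∈ S ∧ x < nextIn S x ∧ ∀ y, x < y → y ∈ S → nextIn S x ≤ y := by
  classical
  obtain ⟨y, hxy, hyS⟩ := h
  have h' : ∃ m : ℕ, x + 1 + (m : ℤ) ∈ S := by
    refine ⟨(y - x - 1).toNat, ?_⟩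
    have hy : x + 1 + ((y - x - 1).toNat : ℤ) = y := by omega
    rw [hy]; exact hyS
  rw [nextIn, dif_pos h']
  refine ⟨Nat.find_spec h', by omega, ?_⟩
  intro z hxz hzS
  have hz : x + 1 + ((z - x - 1).toNat : ℤ) = z := by omega
  have := Nat.find_min' h' (m := (z - x - 1).toNat) (by rw [hz]; exact hzS)
  omega

lemma prevIn_spec (S : Set ℤ) (x : ℤ) (h : ∃ y, y < x ∧ y ∈ S) :
    prevIn S x ∈ S ∧ prevIn S x < x ∧ ∀ y, y < x → y ∈ S → y ≤ prevIn S x := by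
  classical
  obtain ⟨y, hxy, hyS⟩ := h
  have h' : ∃ m : ℕ, x - 1 - (m : ℤ) ∈ S := by
    refine ⟨(x - 1 - y).toNat, ?_⟩
    have hy : x - 1 - ((x - 1 - y).toNat : ℤ) = y := by omega
    rw [hy]; exact hyS
  rw [prevIn, dif_pos h']
  refine ⟨Nat.find_spec h', by omega, ?_⟩
  intro z hxz hzS
  have hz : x - 1 - ((x - 1 - z).toNat : ℤ) = z := by omega
  have := Nat.find_min' h' (m := (x - 1 - z).toNat) (by rw [hz]; exact hzS)
  omega

lemma nextIn_eq (S : Set ℤ) (x y : ℤ) (h : ∃ y, x < y ∧ y ∈ S)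
    (hyS : y ∈ S) (hxy : x < y) (hmid : ∀ z, x < z → z < y → z ∉ S) :
    nextIn S x = y := by
  obtain ⟨h1, h2, h3⟩ := nextIn_spec S x h
  have hle := h3 y hxy hyS
  rcases lt_or_eq_of_le hle with hlt | he
  · exact absurd h1 (hmid _ h2 hlt)
  · exact he

lemma prevIn_eq (S : Set ℤ) (x y : ℤ) (h : ∃ y, y < x ∧ y ∈ S)
    (hyS : y ∈ S) (hxy : y < x) (hmid : ∀ z, y < z → z < x → z ∉ S) :
    prevIn S x = y := by
  obtain ⟨h1, h2, h3⟩ := prevIn_spec S x h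
  have hle := h3 y hxy hyS
  rcases lt_or_eq_of_le hle with hlt | he
  · exact absurd h1 (hmid _ hlt h2)
  · exact he.symm

lemma exists_cycPerm (S : Set ℤ) (hub : ∀ z : ℤ, ∃ y, z < y ∧ y ∈ S)
    (hlb : ∀ z : ℤ, ∃ y, y < z ∧ y ∈ S) :
    ∃ u : Equiv.Perm ℤ, (∀ x ∈ S, u x = nextIn S x) ∧ (∀ x, x ∉ S → u x = x)
      ∧ (∀ x ∈ S, u⁻¹ x = prevIn S x) ∧ (∀ x, x ∉ S → u⁻¹ x = x) := by
  classical
  have hnext : ∀ x ∈ S, prevIn S (nextIn S x) = x := by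
    intro x hx
    obtain ⟨h1, h2, h3⟩ := nextIn_spec S x (hub x)
    exact prevIn_eq S _ x (hlb _) hx h2 (fun z hz1 hz2 hzS => absurd (h3 z hz1 hzS) (by omega))
  have hprev : ∀ x ∈ S, nextIn S (prevIn S x) = x := by
    intro x hx
    obtain ⟨h1, h2, h3⟩ := prevIn_spec S x (hlb x)
    exact nextIn_eq S _ x (hub _) hx h2 (fun z hz1 hz2 hzS => absurd (h3 z hz2 hzS) (by omega))
  refine ⟨⟨fun x => if x ∈ S then nextIn S x else x,
          fun x => if x ∈ S then prevIn S x else x, ?_, ?_⟩, ?_, ?_, ?_, ?_⟩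
  · intro x
    by_cases hx : x ∈ S
    · simp only [hx, if_pos, if_pos ((nextIn_spec S x (hub x)).1)]
      exact hnext x hx
    · simp only [hx, if_neg, if_neg hx, if_false]
  · intro x
    by_cases hx : x ∈ S
    · simp only [hx, if_pos, if_pos ((prevIn_spec S x (hlb x)).1)]
      exact hprev x hx
    · simp only [hx, if_neg, if_neg hx, if_false]
  · intro x hx; simp [Equiv.coe_fn_mk, hx]
  · intro x hx; simp [Equiv.coe_fn_mk, hx]
  · intro x hx; simp [Equiv.Perm.inv_def, Equiv.coe_fn_symm_mk, hx]
  · intro x hx; simp [Equiv.Perm.inv_def, Equiv.coe_fn_symm_mk, hx]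



lemma transp_up {n : ℕ} {i : Fin n} {s : Equiv.Perm ℤ}
    (hs : IsTransposition n ((i : ℤ) + 1) ((i : ℤ) + 2) s) {w : ℤ}
    (h : (n : ℤ) ∣ (w - 1 - (i : ℤ))) : s w = w + 1 := by
  obtain ⟨k, hk⟩ := h
  have h1 : w = ((i : ℤ) + 1) + k * n := by rw [mul_comm k]; omega
  have := hs.1 k
  rw [h1, this]; omega

lemma transp_down {n : ℕ} {i : Fin n} {s : Equiv.Perm ℤ}
    (hs : IsTransposition n ((i : ℤ) + 1) ((i : ℤ) + 2) s) {w : ℤ}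
    (h : (n : ℤ) ∣ (w - 2 - (i : ℤ))) : s w = w - 1 := by
  obtain ⟨k, hk⟩ := h
  have h1 : w = ((i : ℤ) + 2) + k * n := by rw [mul_comm k]; omega
  have := hs.2.1 k
  rw [h1, this]; omega

lemma transp_fix {n : ℕ} {i : Fin n} {s : Equiv.Perm ℤ}
    (hs : IsTransposition n ((i : ℤ) + 1) ((i : ℤ) + 2) s) {w : ℤ}
    (h1 : ¬ (n : ℤ) ∣ (w - 1 - (i : ℤ))) (h2 : ¬ (n : ℤ) ∣ (w - 2 - (i : ℤ))) : s w = w := by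
  refine hs.2.2 w ?_ ?_
  · intro hd; exact h1 (by obtain ⟨k, hk⟩ := hd; exact ⟨k, by omega⟩)
  · intro hd; exact h2 (by obtain ⟨k, hk⟩ := hd; exact ⟨k, by omega⟩)

lemma transp_inv {n : ℕ} {i : Fin n} {s : Equiv.Perm ℤ}
    (hs : IsTransposition n ((i : ℤ) + 1) ((i : ℤ) + 2) s) : s⁻¹ = s := by
  have key : ∀ w : ℤ, s (s w) = w := by
    intro w
    by_cases hA : (n : ℤ) ∣ (w - 1 - (i : ℤ))
    · rw [transp_up hs hA, transp_down hs (by obtain ⟨k, hk⟩ := hA; exact ⟨k, by omega⟩)]; ring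
    · by_cases hB : (n : ℤ) ∣ (w - 2 - (i : ℤ))
      · rw [transp_down hs hB, transp_up hs (by obtain ⟨k, hk⟩ := hB; exact ⟨k, by omega⟩)]; ring
      · rw [transp_fix hs hA hB, transp_fix hs hA hB]
  ext w
  have := key w
  calc s⁻¹ w = s⁻¹ (s (s w)) := by rw [this]
  _ = s w := by rw [Equiv.Perm.inv_def, Equiv.symm_apply_apply]

def zres (n : ℕ) (h0 : 0 < n) (z : ℤ) : Fin n :=
  ⟨(z % (n : ℤ)).toNat, by
    have h1 : 0 ≤ z % (n : ℤ) := Int.emod_nonneg z (by exact_mod_cast h0.ne')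
    have h2 : z % (n : ℤ) < n := Int.emod_lt_of_pos z (by exact_mod_cast h0)
    omega⟩

lemma zres_val (n : ℕ) (h0 : 0 < n) (z : ℤ) : ((zres n h0 z : ℕ) : ℤ) = z % n := by
  simp only [zres]
  have h1 : 0 ≤ z % (n : ℤ) := Int.emod_nonneg z (by exact_mod_cast h0.ne')
  omega

lemma zres_dvd (n : ℕ) (h0 : 0 < n) (z : ℤ) : (n : ℤ) ∣ z - ((zres n h0 z : ℕ) : ℤ) := by
  rw [zres_val]
  exact Int.dvd_self_sub_of_emod_eq rfl

lemma zres_eq_of_dvd (n : ℕ) (h0 : 0 < n) {z z' : ℤ} (h : (n : ℤ) ∣ z - z') :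
    zres n h0 z = zres n h0 z' := by
  obtain ⟨k, hk⟩ := h
  have hz : z = z' + n * k := by omega
  apply Fin.ext
  have : z % (n : ℤ) = z' % n := by rw [hz, Int.add_mul_emod_self_left]
  simp only [zres, this]

lemma zres_inj (n : ℕ) (h0 : 0 < n) {z z' : ℤ} (h : zres n h0 z = zres n h0 z') :
    (n : ℤ) ∣ z - z' := by
  have h1 := zres_dvd n h0 z
  have h2 := zres_dvd n h0 z'
  rw [h] at h1
  have h3 := dvd_sub h1 h2
  have he : z - ((zres n h0 z' : ℕ) : ℤ) - (z' - ((zres n h0 z' : ℕ) : ℤ)) = z - z' := by ring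
  rwa [he] at h3

lemma zres_coe (n : ℕ) (h0 : 0 < n) (i : Fin n) : zres n h0 ((i : ℕ) : ℤ) = i := by
  apply Fin.ext
  simp only [zres]
  have : ((i : ℕ) : ℤ) % (n : ℤ) = (i : ℕ) := Int.emod_eq_of_lt (by positivity) (by exact_mod_cast i.2)
  omega


lemma chain_lemma (n : ℕ) (h0 : 0 < n) (s : Fin n → Equiv.Perm ℤ)
    (hs : ∀ i : Fin n, IsTransposition n ((i : ℤ) + 1) ((i : ℤ) + 2) (s i))
    (e : Equiv.Perm (Fin n)) (D : ℤ → ℕ)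
    (hD : ∀ z, D z = (e.symm (zres n h0 z) : ℕ))
    (v u : ℤ) (hvu : v < u)
    (h1 : D (v - 2) < D (v - 1))
    (h2 : ∀ w, v < w → w < u → D (w - 1) < D (w - 2))
    (h3 : D (u - 2) < D (u - 1)) :
    (List.ofFn (fun j => s (e j))).prod v = u := by
  -- D is strictly decreasing on the chain indices [v-1, u-2]
  have hstep : ∀ i : ℤ, v - 1 ≤ i → i + 1 ≤ u - 2 → D (i + 1) < D i := by
    intro i hi1 hi2
    have := h2 (i + 2) (by omega) (by omega)
    have e1 : i + 2 - 1 = i + 1 := by ring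
    have e2 : i + 2 - 2 = i := by ring
    rwa [e1, e2] at this
  have hdecN : ∀ k : ℕ, ∀ i : ℤ, v - 1 ≤ i → i + (k + 1 : ℕ) ≤ u - 2 → D (i + (k + 1 : ℕ)) < D i := by
    intro k
    induction k with
    | zero => intro i hi1 hi2; push_cast at hi2 ⊢; exact hstep i hi1 (by omega)
    | succ k ih =>
      intro i hi1 hi2
      have hA : D (i + 1 + (k + 1 : ℕ)) < D (i + 1) := ih (i + 1) (by omega) (by push_cast at hi2 ⊢; omega)
      have hB : D (i + 1) < D i := hstep i hi1 (by push_cast at hi2; omega)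
      have he : i + ((k + 1) + 1 : ℕ) = i + 1 + (k + 1 : ℕ) := by push_cast; ring
      rw [he]; omega
  have hdec : ∀ i i' : ℤ, v - 1 ≤ i → i < i' → i' ≤ u - 2 → D i' < D i := by
    intro i i' hi hii hi'
    have hk : i' = i + ((i' - i - 1).toNat + 1 : ℕ) := by omega
    rw [hk]
    exact hdecN _ i hi (by omega)
  -- invariant
  have main : ∀ m : ℕ, m ≤ n → ∃ w, v ≤ w ∧ w ≤ u ∧
      (∀ i : ℤ, v - 1 ≤ i → i ≤ w - 2 → (n - m : ℕ) ≤ D i) ∧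
      (∀ i : ℤ, w - 1 ≤ i → i ≤ u - 2 → D i < (n - m : ℕ)) ∧
      ((List.ofFn (fun j => s (e j))).drop (n - m)).prod v = w := by
    intro m
    induction m with
    | zero =>
      intro _
      refine ⟨v, le_refl v, le_of_lt hvu, ?_, ?_, ?_⟩
      · intro i hi1 hi2; omega
      · intro i hi1 hi2
        have := (e.symm (zres n h0 i)).2
        rw [hD i]; omega
      · rw [List.drop_eq_nil_of_le (by simp), List.prod_nil, Equiv.Perm.one_apply]
    | succ m ih =>
      intro hm
      obtain ⟨w, hw1, hw2, hA, hB, hP⟩ := ih (by omega)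
      set j : ℕ := n - (m + 1) with hj
      have hjn : j < n := by omega
      have hj1 : j + 1 = n - m := by omega
      -- peel off the generator at position j
      have hpeel : ((List.ofFn (fun j => s (e j))).drop j).prod
          = s (e ⟨j, hjn⟩) * ((List.ofFn (fun j => s (e j))).drop (j + 1)).prod := by
        rw [List.drop_eq_getElem_cons (by simp [hjn]), List.prod_cons, List.getElem_ofFn]
      have hPj : ((List.ofFn (fun j => s (e j))).drop j).prod v = s (e ⟨j, hjn⟩) w := by
        rw [hpeel, Equiv.Perm.mul_apply, hj1, hP]
      -- the integer index of the generator at position j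
      set g : Fin n := e ⟨j, hjn⟩ with hg
      have hDg : ∀ z : ℤ, (n : ℤ) ∣ z - (g : ℤ) → D z = j := by
        intro z hz
        rw [hD z, zres_eq_of_dvd n h0 hz, zres_coe, hg, Equiv.symm_apply_apply]
      have hDg' : ∀ z : ℤ, D z = j → (n : ℤ) ∣ z - (g : ℤ) := by
        intro z hz
        rw [hD z] at hz
        have : e.symm (zres n h0 z) = ⟨j, hjn⟩ := Fin.ext hz
        have hzz : zres n h0 z = g := by rw [hg, ← this, Equiv.apply_symm_apply]
        have := zres_dvd n h0 z
        rw [hzz] at this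
        exact this
      by_cases hc1 : w ≤ u - 1 ∧ D (w - 1) = j
      · -- the generator moves w to w + 1
        refine ⟨w + 1, by omega, by omega, ?_, ?_, ?_⟩
        · intro i hi1 hi2
          rcases lt_or_ge i (w - 1) with hi | hi
          · have := hA i hi1 (by omega); omega
          · have : i = w - 1 := by omega
            rw [this, hc1.2]
        · intro i hi1 hi2
          have : D i < D (w - 1) := hdec (w - 1) i (by omega) (by omega) hi2
          rw [hc1.2] at this; omega
        · rw [hPj, transp_up (hs g) (hDg' _ hc1.2)]
      · -- the generator fixes w
        push_neg at hc1
        refine ⟨w, hw1, hw2, ?_, ?_, ?_⟩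
        · intro i hi1 hi2
          have := hA i hi1 hi2; omega
        · intro i hi1 hi2
          have hlt : D i < j + 1 := by have := hB i hi1 hi2; omega
          rcases eq_or_lt_of_le (Nat.lt_succ_iff.mp hlt) with he | hlt'
          · exfalso
            -- D i = j : the generator at position j touches the chain
            rcases eq_or_lt_of_le hi1 with hiw | hiw
            · -- i = w - 1 : contradicts case hypothesis (w ≤ u - 1 here)
              rw [← hiw] at he
              exact hc1 (by omega) he
            · -- i > w - 1 : D i < D (w-1) ≤ j
              have hd1 : D i < D (w - 1) := hdec (w - 1) i (by omega) hiw hi2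
              have hd2 : D (w - 1) < j + 1 := by
                have := hB (w - 1) (by omega) (by omega); omega
              omega
          · exact hlt'
        · rw [hPj]
          apply transp_fix (hs g)
          · intro hdvd
            have hDw1 : D (w - 1) = j := hDg _ hdvd
            rcases lt_or_ge w u with hwu | hwu
            · exact hc1 (by omega) hDw1
            · have hwu' : w = u := by omega
              have hDu2 : (n - m : ℕ) ≤ D (u - 2) := hA (u - 2) (by omega) (by omega)
              have := h3
              rw [hwu'] at hDw1
              omega
          · intro hdvd
            have hDw2 : D (w - 2) = j := hDg _ hdvd
            rcases lt_or_ge v w with hvw | hvw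
            · have : (n - m : ℕ) ≤ D (w - 2) := hA (w - 2) (by omega) (by omega)
              omega
            · have hvw' : w = v := by omega
              have hDv1 : D (v - 1) < (n - m : ℕ) := by
                apply hB (v - 1) (by omega) (by omega)
              rw [hvw'] at hDw2
              omega
  obtain ⟨w, hw1, hw2, hA, hB, hP⟩ := main n (le_refl n)
  have hwu : w = u := by
    by_contra hne
    have hwlt : w < u := by omega
    have := hB (w - 1) (by omega) (by omega)
    omega
  rw [Nat.sub_self] at hP
  rw [List.drop_zero] at hP
  rw [hP, hwu]

lemma reverse_ofFn {n : ℕ} {α : Type*} (f : Fin n → α) :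
    (List.ofFn f).reverse = List.ofFn (fun j => f j.rev) := by
  apply List.ext_getElem (by simp)
  intro i h1 h2
  simp only [List.getElem_reverse, List.getElem_ofFn]
  congr 1
  simp at h1 h2 ⊢
  ext
  simp [Fin.rev]
  omega

lemma kbound {n k d lo hi : ℤ} (h0 : 0 < n) (hd : d = k * n) (h1 : lo * n < d) (h2 : d < hi * n) :
    lo < k ∧ k < hi :=
  ⟨lt_of_mul_lt_mul_right (by omega : lo * n < k * n) h0.le,
   lt_of_mul_lt_mul_right (by omega : k * n < hi * n) h0.le⟩

lemma word_inv (n : ℕ) (s : Fin n → Equiv.Perm ℤ)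
    (hs : ∀ i : Fin n, IsTransposition n ((i : ℤ) + 1) ((i : ℤ) + 2) (s i))
    (e : Equiv.Perm (Fin n)) :
    ((List.ofFn (fun j => s (e j))).prod)⁻¹
      = (List.ofFn (fun j => s ((Fin.revPerm.trans e) j))).prod := by
  rw [List.prod_inv_reverse, List.map_ofFn]
  have h1 : ((fun x => x⁻¹) ∘ fun j => s (e j)) = fun j => s (e j) := by
    funext j; exact transp_inv (hs (e j))
  rw [h1, reverse_ofFn]
  congr 1
theorem statement3 (n : ℕ) (hn : 2 ≤ n) (c : Equiv.Perm ℤ) (hc : IsCoxeter n c) :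
    ∃ (s t : ℕ) (a al : ℕ → ℤ),
      1 ≤ s ∧ 1 ≤ t ∧ s + t = n ∧
      (∀ i j, 1 ≤ i → i < j → j ≤ s → a i < a j) ∧
      (∀ i j, 1 ≤ i → i < j → j ≤ t → al i < al j) ∧
      (∀ i, 1 ≤ i → i ≤ s → 1 ≤ a i ∧ a i ≤ n) ∧
      (∀ i, 1 ≤ i → i ≤ t → 1 ≤ al i ∧ al i ≤ n) ∧
      (∀ i j, 1 ≤ i → i ≤ s → 1 ≤ j → j ≤ t → a i ≠ al j) ∧
      (∀ x : ℤ, 1 ≤ x → x ≤ n →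
        (∃ i, 1 ≤ i ∧ i ≤ s ∧ a i = x) ∨ (∃ j, 1 ≤ j ∧ j ≤ t ∧ al j = x)) ∧
      ∃ u v : Equiv.Perm ℤ,
        IsCycleList n ((List.range' 1 s).map a) 1 u ∧
        IsCycleList n (((List.range' 1 t).map al).reverse) (-1) v ∧
        c = u * v := by
  classical
  obtain ⟨sg, hsg, e, hce⟩ := hc
  have h0 : 0 < n := by omega
  set D : ℤ → ℕ := fun z => ((e.symm (zres n h0 z)) : ℕ) with hDdef
  have hD : ∀ z, D z = ((e.symm (zres n h0 z)) : ℕ) := fun z => rfl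
  have hDlt : ∀ z, D z < n := fun z => (e.symm (zres n h0 z)).2
  have hDmod : ∀ z z' : ℤ, (n : ℤ) ∣ z - z' → D z = D z' := by
    intro z z' h
    simp only [hD, zres_eq_of_dvd n h0 h]
  have hndvd1 : ¬ (n : ℤ) ∣ (1 : ℤ) := by
    intro h
    have := Int.le_of_dvd one_pos h
    omega
  have hDne : ∀ z : ℤ, D (z - 1) ≠ D (z - 2) := by
    intro z h
    have h1 : zres n h0 (z - 1) = zres n h0 (z - 2) := e.symm.injective (Fin.ext h)
    have h2 := zres_inj n h0 h1
    have h3 : z - 1 - (z - 2) = 1 := by ring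
    rw [h3] at h2
    exact hndvd1 h2
  set Sup : Set ℤ := {z | D (z - 2) < D (z - 1)} with hSupdef
  set Sdn : Set ℤ := {z | D (z - 1) < D (z - 2)} with hSdndef
  have hmemSup : ∀ z : ℤ, z ∈ Sup ↔ D (z - 2) < D (z - 1) := fun z => Iff.rfl
  have hmemSdn : ∀ z : ℤ, z ∈ Sdn ↔ D (z - 1) < D (z - 2) := fun z => Iff.rfl
  have hcompl : ∀ z : ℤ, z ∈ Sup ↔ z ∉ Sdn := by
    intro z
    rw [hmemSup, hmemSdn]
    have := hDne z
    omega
  have hcompl2 : ∀ z : ℤ, z ∉ Sup → z ∈ Sdn := by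
    intro z h
    by_contra hd
    exact h ((hcompl z).mpr hd)
  have hShiftSup : ∀ z z' : ℤ, (n : ℤ) ∣ z - z' → (z ∈ Sup ↔ z' ∈ Sup) := by
    intro z z' hdvd
    obtain ⟨k, hk⟩ := hdvd
    have d1 : D (z - 1) = D (z' - 1) := hDmod _ _ ⟨k, by omega⟩
    have d2 : D (z - 2) = D (z' - 2) := hDmod _ _ ⟨k, by omega⟩
    rw [hmemSup, hmemSup, d1, d2]
  have hShiftSdn : ∀ z z' : ℤ, (n : ℤ) ∣ z - z' → (z ∈ Sdn ↔ z' ∈ Sdn) := by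
    intro z z' hdvd
    obtain ⟨k, hk⟩ := hdvd
    have d1 : D (z - 1) = D (z' - 1) := hDmod _ _ ⟨k, by omega⟩
    have d2 : D (z - 2) = D (z' - 2) := hDmod _ _ ⟨k, by omega⟩
    rw [hmemSdn, hmemSdn, d1, d2]
  have hUnbdd : ∀ S : Set ℤ, (∀ z z' : ℤ, (n : ℤ) ∣ z - z' → (z ∈ S ↔ z' ∈ S)) →
      ∀ v0, v0 ∈ S → (∀ z, ∃ y, z < y ∧ y ∈ S) ∧ (∀ z, ∃ y, y < z ∧ y ∈ S) := by
    intro S hSper v0 hv0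
    have hn1 : (1 : ℤ) ≤ n := by exact_mod_cast h0
    constructor
    · intro z
      set K : ℤ := (z - v0).toNat + 1 with hK
      have hK0 : 0 ≤ K := by omega
      have hKK : K ≤ K * n := le_mul_of_one_le_right hK0 hn1
      exact ⟨v0 + K * n, by omega, (hSper _ _ ⟨K, by ring⟩).mpr hv0⟩
    · intro z
      set K : ℤ := (v0 - z).toNat + 1 with hK
      have hK0 : 0 ≤ K := by omega
      have hKK : K ≤ K * n := le_mul_of_one_le_right hK0 hn1
      exact ⟨v0 - K * n, by omega, (hSper _ _ ⟨-K, by ring⟩).mpr hv0⟩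
  -- base points
  have hSupmem : ((e ⟨0, h0⟩ : Fin n) : ℤ) + 2 ∈ Sup := by
    set z : ℤ := ((e ⟨0, h0⟩ : Fin n) : ℤ) + 2 with hz
    have h2 : z - 2 = (((e ⟨0, h0⟩ : Fin n) : ℕ) : ℤ) := by rw [hz]; ring
    have hz2 : D (z - 2) = 0 := by
      rw [h2, hD, zres_coe, Equiv.symm_apply_apply]
    have hne := hDne z
    rw [hmemSup, hz2]
    omega
  have hSdnmem : ((e ⟨n - 1, by omega⟩ : Fin n) : ℤ) + 2 ∈ Sdn := by
    set z : ℤ := ((e ⟨n - 1, by omega⟩ : Fin n) : ℤ) + 2 with hz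
    have h2 : z - 2 = (((e ⟨n - 1, by omega⟩ : Fin n) : ℕ) : ℤ) := by rw [hz]; ring
    have hz2 : D (z - 2) = n - 1 := by
      rw [h2, hD, zres_coe, Equiv.symm_apply_apply]
    have hne := hDne z
    have hlt := hDlt (z - 1)
    rw [hmemSdn, hz2]
    omega
  obtain ⟨hubS, hlbS⟩ := hUnbdd Sup hShiftSup _ hSupmem
  obtain ⟨hubT, hlbT⟩ := hUnbdd Sdn hShiftSdn _ hSdnmem
  obtain ⟨U, hU1, hU2, hU3, hU4⟩ := exists_cycPerm Sup hubS hlbS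
  obtain ⟨Wp, hW1, hW2, hW3, hW4⟩ := exists_cycPerm Sdn hubT hlbT
  -- computation of c on Sup
  have hcx_up : ∀ x ∈ Sup, c x = nextIn Sup x := by
    intro x hx
    obtain ⟨hm1, hm2, hm3⟩ := nextIn_spec Sup x (hubS x)
    rw [hce]
    apply chain_lemma n h0 sg hsg e D hD x (nextIn Sup x) hm2 ((hmemSup x).mp hx) ?_
      ((hmemSup _).mp hm1)
    intro w hw1 hw2
    have hwS : w ∉ Sup := fun hwS => absurd (hm3 w hw1 hwS) (by omega)
    have hwd : w ∈ Sdn := by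
      by_contra hwd
      exact hwS ((hcompl w).mpr hwd)
    exact (hmemSdn w).mp hwd
  -- computation of c on Sdn, via the reversed word
  have hrev : c⁻¹ = (List.ofFn (fun j => sg ((Fin.revPerm.trans e) j))).prod := by
    rw [hce]
    exact word_inv n sg hsg e
  have hD'' : ∀ z : ℤ, (((Fin.revPerm.trans e).symm (zres n h0 z) : ℕ)) = n - 1 - D z := by
    intro z
    rw [Equiv.symm_trans_apply, Fin.revPerm_symm, Fin.revPerm_apply, Fin.val_rev, hD]
    omega
  have hcx_dn : ∀ x ∈ Sdn, c x = prevIn Sdn x := by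
    intro x hx
    obtain ⟨hm1, hm2, hm3⟩ := prevIn_spec Sdn x (hlbT x)
    have key : c⁻¹ (prevIn Sdn x) = x := by
      rw [hrev]
      apply chain_lemma n h0 sg hsg (Fin.revPerm.trans e)
        (fun z => (((Fin.revPerm.trans e).symm (zres n h0 z) : ℕ))) (fun z => rfl)
        (prevIn Sdn x) x hm2 ?_ ?_ ?_
      · have h1 := (hmemSdn _).mp hm1
        have l1 := hDlt (prevIn Sdn x - 1)
        have l2 := hDlt (prevIn Sdn x - 2)
        simp only [hD'']
        omega
      · intro w hw1 hw2
        have hwS : w ∉ Sdn := fun hwS => absurd (hm3 w hw2 hwS) (by omega)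
        have hwu : w ∈ Sup := (hcompl w).mpr hwS
        have h1 := (hmemSup w).mp hwu
        have l1 := hDlt (w - 1)
        have l2 := hDlt (w - 2)
        simp only [hD'']
        omega
      · have h1 := (hmemSdn x).mp hx
        have l1 := hDlt (x - 1)
        have l2 := hDlt (x - 2)
        simp only [hD'']
        omega
    have := congrArg c key
    rw [Equiv.Perm.inv_def, Equiv.apply_symm_apply] at this
    exact this.symm
  -- c = U * Wp⁻¹
  have hceq : c = U * Wp⁻¹ := by
    ext x
    rw [Equiv.Perm.mul_apply]
    by_cases hx : x ∈ Sup
    · rw [hW4 x (fun h => (hcompl x).mp hx h), hU1 x hx]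
      exact hcx_up x hx
    · have hxd : x ∈ Sdn := by
        by_contra hxd
        exact hx ((hcompl x).mpr hxd)
      have hy := (prevIn_spec Sdn x (hlbT x)).1
      rw [hW3 x hxd, hU2 _ (fun h => (hcompl _).mp h hy)]
      exact hcx_dn x hxd
  -- the finite sets
  set A : Finset ℤ := (Finset.Icc (1 : ℤ) (n : ℤ)).filter (fun b => b ∈ Sup) with hA
  set B : Finset ℤ := (Finset.Icc (1 : ℤ) (n : ℤ)).filter (fun b => b ∈ Sdn) with hB
  set la : List ℤ := A.sort (· ≤ ·) with hla
  set lb : List ℤ := B.sort (· ≤ ·) with hlb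
  have hmemA : ∀ b : ℤ, b ∈ A ↔ (1 ≤ b ∧ b ≤ (n : ℤ)) ∧ b ∈ Sup := by
    intro b; rw [hA, Finset.mem_filter, Finset.mem_Icc]
  have hmemB : ∀ b : ℤ, b ∈ B ↔ (1 ≤ b ∧ b ≤ (n : ℤ)) ∧ b ∈ Sdn := by
    intro b; rw [hB, Finset.mem_filter, Finset.mem_Icc]
  have hred : ∀ x : ℤ, ∃ b, 1 ≤ b ∧ b ≤ (n : ℤ) ∧ (n : ℤ) ∣ x - b := by
    intro x
    have e1 : 0 ≤ (x - 1) % n := Int.emod_nonneg (x - 1) (by exact_mod_cast h0.ne')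
    have e2 : (x - 1) % n < n := Int.emod_lt_of_pos (x - 1) (by exact_mod_cast h0)
    refine ⟨(x - 1) % n + 1, by omega, by omega, ⟨(x - 1) / n, ?_⟩⟩
    have := Int.mul_ediv_add_emod (x - 1) (n : ℤ)
    omega
  have hsort : ∀ (F : Finset ℤ), (F.sort (· ≤ ·)).Pairwise (· < ·) := fun F => (Finset.sortedLT_sort F).pairwise
  have hlaget : ∀ i j (hi : i < la.length) (hj : j < la.length), i < j → la[i] < la[j] := by
    intro i j hi hj hij
    exact (List.pairwise_iff_getElem.mp (hsort A)) i j hi hj hij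
  have hlbget : ∀ i j (hi : i < lb.length) (hj : j < lb.length), i < j → lb[i] < lb[j] := by
    intro i j hi hj hij
    exact (List.pairwise_iff_getElem.mp (hsort B)) i j hi hj hij
  have hlaidx : ∀ m i (hm : m < la.length) (hi : i < la.length), la[i] < la[m] → i < m := by
    intro m i hm hi h
    by_contra hle
    push_neg at hle
    rcases eq_or_lt_of_le hle with he | hlt
    · subst he; exact lt_irrefl _ h
    · have := hlaget m i hm hi hlt; omega
  have hlbidx : ∀ m i (hm : m < lb.length) (hi : i < lb.length), lb[i] < lb[m] → i < m := by
    intro m i hm hi h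
    by_contra hle
    push_neg at hle
    rcases eq_or_lt_of_le hle with he | hlt
    · subst he; exact lt_irrefl _ h
    · have := hlbget m i hm hi hlt; omega
  have hmemla : ∀ i (hi : i < la.length), la[i] ∈ Sup ∧ 1 ≤ la[i] ∧ la[i] ≤ (n : ℤ) := by
    intro i hi
    have h1 : la[i] ∈ A := (A.mem_sort (· ≤ ·)).mp (List.getElem_mem hi)
    rw [hmemA] at h1
    exact ⟨h1.2, h1.1.1, h1.1.2⟩
  have hmemlb : ∀ i (hi : i < lb.length), lb[i] ∈ Sdn ∧ 1 ≤ lb[i] ∧ lb[i] ≤ (n : ℤ) := by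
    intro i hi
    have h1 : lb[i] ∈ B := (B.mem_sort (· ≤ ·)).mp (List.getElem_mem hi)
    rw [hmemB] at h1
    exact ⟨h1.2, h1.1.1, h1.1.2⟩
  have hfindla : ∀ b : ℤ, b ∈ Sup → 1 ≤ b → b ≤ (n : ℤ) → ∃ (m : ℕ) (hm : m < la.length), la[m] = b := by
    intro b h1 h2 h3
    have : b ∈ la := (A.mem_sort (· ≤ ·)).mpr ((hmemA b).mpr ⟨⟨h2, h3⟩, h1⟩)
    exact List.mem_iff_getElem.mp this
  have hfindlb : ∀ b : ℤ, b ∈ Sdn → 1 ≤ b → b ≤ (n : ℤ) → ∃ (m : ℕ) (hm : m < lb.length), lb[m] = b := by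
    intro b h1 h2 h3
    have : b ∈ lb := (B.mem_sort (· ≤ ·)).mpr ((hmemB b).mpr ⟨⟨h2, h3⟩, h1⟩)
    exact List.mem_iff_getElem.mp this
  -- cardinalities
  have hABdisj : Disjoint A B := by
    rw [Finset.disjoint_left]
    intro b hbA hbB
    exact (hcompl b).mp ((hmemA b).mp hbA).2 ((hmemB b).mp hbB).2
  have hABunion : A ∪ B = Finset.Icc (1 : ℤ) (n : ℤ) := by
    ext b
    rw [Finset.mem_union, hmemA, hmemB, Finset.mem_Icc]
    constructor
    · rintro (⟨h1, _⟩ | ⟨h1, _⟩) <;> exact h1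
    · intro h1
      by_cases hb : b ∈ Sup
      · exact Or.inl ⟨h1, hb⟩
      · exact Or.inr ⟨h1, hcompl2 b hb⟩
  have hlalen : la.length = A.card := A.length_sort (· ≤ ·)
  have hlblen : lb.length = B.card := B.length_sort (· ≤ ·)
  have hcard : la.length + lb.length = n := by
    rw [hlalen, hlblen, ← Finset.card_union_of_disjoint hABdisj, hABunion, Int.card_Icc]
    omega
  have hlapos : 0 < la.length := by
    rw [hlalen]
    apply Finset.card_pos.mpr
    obtain ⟨b, hb1, hb2, hb3⟩ := hred (((e ⟨0, h0⟩ : Fin n) : ℤ) + 2)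
    exact ⟨b, (hmemA b).mpr ⟨⟨hb1, hb2⟩, (hShiftSup _ _ hb3).mp hSupmem⟩⟩
  have hlbpos : 0 < lb.length := by
    rw [hlblen]
    apply Finset.card_pos.mpr
    obtain ⟨b, hb1, hb2, hb3⟩ := hred (((e ⟨n - 1, by omega⟩ : Fin n) : ℤ) + 2)
    exact ⟨b, (hmemB b).mpr ⟨⟨hb1, hb2⟩, (hShiftSdn _ _ hb3).mp hSdnmem⟩⟩
  -- mid-interval emptiness helpers
  have hmidla : ∀ (p q : ℕ) (hp : p < la.length) (hq : q < la.length), p + 1 = q →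
      ∀ (k z : ℤ), la[p] + k * n < z → z < la[q] + k * n → z ∉ Sup := by
    intro p q hp hq hpq k z hz1 hz2 hzS
    obtain ⟨b, hb1, hb2, hb3⟩ := hred z
    have hbS : b ∈ Sup := (hShiftSup _ _ hb3).mp hzS
    obtain ⟨m, hm, hmb⟩ := hfindla b hbS hb1 hb2
    obtain ⟨k'', hk''⟩ := hb3
    have hk2 : z - b = k'' * n := by rw [hk'']; ring
    have hp1 := (hmemla p hp).2
    have hq1 := (hmemla q hq).2
    have hn1 : (1 : ℤ) ≤ n := by exact_mod_cast h0
    have hdd : z - k * n - b = (k'' - k) * n := by rw [sub_mul]; omega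
    have hkb := kbound (lo := -1) (hi := 1) (by exact_mod_cast h0) hdd (by omega) (by omega)
    have h00 : k'' - k = 0 := by omega
    rw [h00, zero_mul] at hdd
    have hi1 : p < m := hlaidx m p hm hp (by omega)
    have hi2 : m < q := hlaidx q m hq hm (by omega)
    omega
  have hmidlb : ∀ (p q : ℕ) (hp : p < lb.length) (hq : q < lb.length), p + 1 = q →
      ∀ (k z : ℤ), lb[p] + k * n < z → z < lb[q] + k * n → z ∉ Sdn := by
    intro p q hp hq hpq k z hz1 hz2 hzS
    obtain ⟨b, hb1, hb2, hb3⟩ := hred z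
    have hbS : b ∈ Sdn := (hShiftSdn _ _ hb3).mp hzS
    obtain ⟨m, hm, hmb⟩ := hfindlb b hbS hb1 hb2
    obtain ⟨k'', hk''⟩ := hb3
    have hk2 : z - b = k'' * n := by rw [hk'']; ring
    have hp1 := (hmemlb p hp).2
    have hq1 := (hmemlb q hq).2
    have hn1 : (1 : ℤ) ≤ n := by exact_mod_cast h0
    have hdd : z - k * n - b = (k'' - k) * n := by rw [sub_mul]; omega
    have hkb := kbound (lo := -1) (hi := 1) (by exact_mod_cast h0) hdd (by omega) (by omega)
    have h00 : k'' - k = 0 := by omega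
    rw [h00, zero_mul] at hdd
    have hi1 : p < m := hlbidx m p hm hp (by omega)
    have hi2 : m < q := hlbidx q m hq hm (by omega)
    omega
  -- wrap-around emptiness for la
  have hwrapla : ∀ (k z : ℤ), la[la.length - 1]'(by omega) + k * n < z →
      z < la[0]'(by omega) + (1 + k) * n → z ∉ Sup := by
    intro k z hz1 hz2 hzS
    obtain ⟨b, hb1, hb2, hb3⟩ := hred z
    have hbS : b ∈ Sup := (hShiftSup _ _ hb3).mp hzS
    obtain ⟨m, hm, hmb⟩ := hfindla b hbS hb1 hb2
    obtain ⟨k'', hk''⟩ := hb3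
    have hk2 : z - b = k'' * n := by rw [hk'']; ring
    have hp1 := (hmemla (la.length - 1) (by omega)).2
    have hq1 := (hmemla 0 (by omega)).2
    have hn1 : (1 : ℤ) ≤ n := by exact_mod_cast h0
    have hdd : z - k * n - b = (k'' - k) * n := by rw [sub_mul]; omega
    have hz2' : z < la[0]'(by omega) + n + k * n := by
      have he : (1 + k) * n = n + k * n := by ring
      omega
    have hkb := kbound (lo := -1) (hi := 2) (by exact_mod_cast h0) hdd (by omega) (by omega)
    rcases (by omega : k'' - k = 0 ∨ k'' - k = 1) with hk0 | hk1
    · rw [hk0, zero_mul] at hdd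
      have hi1 : la.length - 1 < m := hlaidx m (la.length - 1) hm (by omega) (by omega)
      omega
    · rw [hk1, one_mul] at hdd
      have hi1 : m < 0 := hlaidx 0 m (by omega) hm (by omega)
      omega
  -- wrap-around emptiness for lb
  have hwraplb : ∀ (k z : ℤ), lb[lb.length - 1]'(by omega) + (-1 + k) * n < z →
      z < lb[0]'(by omega) + k * n → z ∉ Sdn := by
    intro k z hz1 hz2 hzS
    obtain ⟨b, hb1, hb2, hb3⟩ := hred z
    have hbS : b ∈ Sdn := (hShiftSdn _ _ hb3).mp hzS
    obtain ⟨m, hm, hmb⟩ := hfindlb b hbS hb1 hb2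
    obtain ⟨k'', hk''⟩ := hb3
    have hk2 : z - b = k'' * n := by rw [hk'']; ring
    have hp1 := (hmemlb (lb.length - 1) (by omega)).2
    have hq1 := (hmemlb 0 (by omega)).2
    have hn1 : (1 : ℤ) ≤ n := by exact_mod_cast h0
    have hdd : z - k * n - b = (k'' - k) * n := by rw [sub_mul]; omega
    have hz1' : lb[lb.length - 1]'(by omega) - n + k * n < z := by
      have he : (-1 + k) * n = -n + k * n := by ring
      omega
    have hkb := kbound (lo := -2) (hi := 1) (by exact_mod_cast h0) hdd (by omega) (by omega)
    rcases (by omega : k'' - k = 0 ∨ k'' - k = -1) with hk0 | hk1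
    · rw [hk0, zero_mul] at hdd
      have hi1 : m < 0 := hlbidx 0 m (by omega) hm (by omega)
      omega
    · rw [hk1] at hdd
      have he2 : (-1 : ℤ) * n = -n := by ring
      rw [he2] at hdd
      have hi1 : lb.length - 1 < m := hlbidx m (lb.length - 1) hm (by omega) (by omega)
      omega
  -- the answer
  refine ⟨la.length, lb.length, fun i => la.getD (i - 1) 0, fun i => lb.getD (i - 1) 0,
    hlapos, hlbpos, hcard, ?_, ?_, ?_, ?_, ?_, ?_, ?_⟩
  · intro i j hi hij hj
    show la.getD (i - 1) 0 < la.getD (j - 1) 0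
    rw [List.getD_eq_getElem la 0 (by omega), List.getD_eq_getElem la 0 (by omega)]
    exact hlaget (i - 1) (j - 1) (by omega) (by omega) (by omega)
  · intro i j hi hij hj
    show lb.getD (i - 1) 0 < lb.getD (j - 1) 0
    rw [List.getD_eq_getElem lb 0 (by omega), List.getD_eq_getElem lb 0 (by omega)]
    exact hlbget (i - 1) (j - 1) (by omega) (by omega) (by omega)
  · intro i hi1 hi2
    show 1 ≤ la.getD (i - 1) 0 ∧ la.getD (i - 1) 0 ≤ (n : ℤ)
    rw [List.getD_eq_getElem la 0 (by omega)]
    exact (hmemla (i - 1) (by omega)).2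
  · intro i hi1 hi2
    show 1 ≤ lb.getD (i - 1) 0 ∧ lb.getD (i - 1) 0 ≤ (n : ℤ)
    rw [List.getD_eq_getElem lb 0 (by omega)]
    exact (hmemlb (i - 1) (by omega)).2
  · intro i j hi1 hi2 hj1 hj2
    show la.getD (i - 1) 0 ≠ lb.getD (j - 1) 0
    rw [List.getD_eq_getElem la 0 (by omega), List.getD_eq_getElem lb 0 (by omega)]
    intro hcontr
    have h1 := (hmemla (i - 1) (by omega)).1
    have h2 := (hmemlb (j - 1) (by omega)).1
    rw [hcontr] at h1
    exact (hcompl _).mp h1 h2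
  · intro x hx1 hx2
    by_cases hx : x ∈ Sup
    · obtain ⟨m, hm, hmb⟩ := hfindla x hx hx1 hx2
      refine Or.inl ⟨m + 1, by omega, by omega, ?_⟩
      show la.getD (m + 1 - 1) 0 = x
      rw [List.getD_eq_getElem la 0 (by omega)]
      simpa using hmb
    · obtain ⟨m, hm, hmb⟩ := hfindlb x (hcompl2 x hx) hx1 hx2
      refine Or.inr ⟨m + 1, by omega, by omega, ?_⟩
      show lb.getD (m + 1 - 1) 0 = x
      rw [List.getD_eq_getElem lb 0 (by omega)]
      simpa using hmb
  -- the cycle decomposition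
  have hLeqa : (List.range' 1 la.length).map (fun i => la.getD (i - 1) 0) = la := by
    apply List.ext_getElem (by simp)
    intro i h1 h2
    simp only [List.getElem_map, List.getElem_range']
    have h3 : 1 + 1 * i - 1 = i := by omega
    rw [h3, List.getD_eq_getElem la 0 h2]
  have hLeqb : (List.range' 1 lb.length).map (fun i => lb.getD (i - 1) 0) = lb := by
    apply List.ext_getElem (by simp)
    intro i h1 h2
    simp only [List.getElem_map, List.getElem_range']
    have h3 : 1 + 1 * i - 1 = i := by omega
    rw [h3, List.getD_eq_getElem lb 0 h2]
  refine ⟨U, Wp⁻¹, ?_, ?_, hceq⟩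
  · -- IsCycleList for U
    rw [hLeqa]
    refine ⟨?_, ?_, ?_⟩
    · intro i hi k
      rw [List.getD_eq_getElem la 0 (by omega), List.getD_eq_getElem la 0 (by omega)]
      have hxS : la[i] + k * n ∈ Sup := by
        refine (hShiftSup _ _ ⟨k, by ring⟩).mpr (hmemla i (by omega)).1
      rw [hU1 _ hxS]
      apply nextIn_eq Sup _ _ (hubS _)
      · exact (hShiftSup _ _ ⟨k, by ring⟩).mpr (hmemla (i + 1) (by omega)).1
      · have := hlaget i (i + 1) (by omega) (by omega) (by omega)
        omega
      · intro z hz1 hz2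
        exact hmidla i (i + 1) (by omega) (by omega) rfl k z hz1 hz2
    · intro hL k
      rw [la.getLast_eq_getElem hL, la.head_eq_getElem hL]
      have hxS : la[la.length - 1]'(by omega) + k * n ∈ Sup := by
        refine (hShiftSup _ _ ⟨k, by ring⟩).mpr (hmemla (la.length - 1) (by omega)).1
      rw [hU1 _ hxS]
      apply nextIn_eq Sup _ _ (hubS _)
      · exact (hShiftSup _ _ ⟨1 + k, by ring⟩).mpr (hmemla 0 (by omega)).1
      · have h1 := (hmemla (la.length - 1) (by omega)).2
        have h2 := (hmemla 0 (by omega)).2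
        have : (1 + k) * n = n + k * n := by ring
        omega
      · intro z hz1 hz2
        exact hwrapla k z hz1 hz2
    · intro x hx
      apply hU2
      intro hxS
      obtain ⟨b, hb1, hb2, hb3⟩ := hred x
      have hbS : b ∈ Sup := (hShiftSup _ _ hb3).mp hxS
      obtain ⟨m, hm, hmb⟩ := hfindla b hbS hb1 hb2
      exact hx b (hmb ▸ List.getElem_mem hm) hb3
  · -- IsCycleList for Wp⁻¹
    rw [hLeqb]
    have hrevlen : lb.reverse.length = lb.length := lb.length_reverse
    refine ⟨?_, ?_, ?_⟩
    · intro i hi k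
      rw [hrevlen] at hi
      rw [List.getD_eq_getElem lb.reverse 0 (by omega), List.getD_eq_getElem lb.reverse 0 (by omega),
        List.getElem_reverse, List.getElem_reverse]
      have he1 : lb.length - 1 - i = (lb.length - 1 - (i + 1)) + 1 := by omega
      have hxS : lb[lb.length - 1 - i]'(by omega) + k * n ∈ Sdn := by
        refine (hShiftSdn _ _ ⟨k, by ring⟩).mpr (hmemlb (lb.length - 1 - i) (by omega)).1
      rw [hW3 _ hxS]
      apply prevIn_eq Sdn _ _ (hlbT _)
      · exact (hShiftSdn _ _ ⟨k, by ring⟩).mpr (hmemlb (lb.length - 1 - (i + 1)) (by omega)).1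
      · have := hlbget (lb.length - 1 - (i + 1)) (lb.length - 1 - i) (by omega) (by omega) (by omega)
        omega
      · intro z hz1 hz2
        exact hmidlb (lb.length - 1 - (i + 1)) (lb.length - 1 - i) (by omega) (by omega)
          (by omega) k z hz1 hz2
    · intro hL k
      have hbne : lb ≠ [] := by simpa using hL
      rw [List.getLast_reverse hL, List.head_reverse hL,
        lb.head_eq_getElem hbne, lb.getLast_eq_getElem hbne]
      have hxS : lb[0]'(by omega) + k * n ∈ Sdn := by
        refine (hShiftSdn _ _ ⟨k, by ring⟩).mpr (hmemlb 0 (by omega)).1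
      rw [hW3 _ hxS]
      apply prevIn_eq Sdn _ _ (hlbT _)
      · exact (hShiftSdn _ _ ⟨-1 + k, by ring⟩).mpr (hmemlb (lb.length - 1) (by omega)).1
      · have h1 := (hmemlb (lb.length - 1) (by omega)).2
        have h2 := (hmemlb 0 (by omega)).2
        have : (-1 + k) * n = -n + k * n := by ring
        omega
      · intro z hz1 hz2
        exact hwraplb k z hz1 hz2
    · intro x hx
      apply hW4
      intro hxS
      obtain ⟨b, hb1, hb2, hb3⟩ := hred x
      have hbS : b ∈ Sdn := (hShiftSdn _ _ hb3).mp hxS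
      obtain ⟨m, hm, hmb⟩ := hfindlb b hbS hb1 hb2
      apply hx b ?_ hb3
      rw [List.mem_reverse]
      exact hmb ▸ List.getElem_mem hm
end

section
/- Let G be a group, R ⊆ G a subset generating G as a monoid, and c ∈ G a balanced element; let P_c and M(P_c) be as above. Then every element of M(P_c) left-divides some power of ⟨c⟩: for every m ∈ M(P_c) there exist k ∈ ℕ and m' ∈ M(P_c) with m·m' = ⟨c⟩^k. -/
variable {G : Type*} [Group G]

/-- The length `l_R` of `g` with respect to the generating set `R`. -/
noncomputable def genLength (R : Set G) (g : G) : ℕ :=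
  sInf {m | ∃ L : List G, L.length = m ∧ (∀ x ∈ L, x ∈ R) ∧ L.prod = g}

/-- `h` left-divides `g` (with respect to the length `l_R`). -/
def LeftDvd (R : Set G) (h g : G) : Prop :=
  ∃ h' : G, g = h * h' ∧ genLength R g = genLength R h + genLength R h'

/-- `h` right-divides `g` (with respect to the length `l_R`). -/
def GRightDvd (R : Set G) (h g : G) : Prop :=
  ∃ h' : G, g = h' * h ∧ genLength R g = genLength R h' + genLength R h

/-- `c` is balanced : its left and right divisors coincide. -/
def GBalanced (R : Set G) (c : G) : Prop :=
  ∀ h : G, LeftDvd R h c ↔ GRightDvd R h c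

/-- The set `P_c` of divisors of `c`. -/
def DivSet (R : Set G) (c : G) : Set G := {h | LeftDvd R h c}

/-- The defining relations of the dual monoid `M(P_c)`. -/
def DualRel (R : Set G) (c : G) :
    FreeMonoid (DivSet R c) → FreeMonoid (DivSet R c) → Prop := fun x y =>
  ∃ (w w' : DivSet R c) (h : (w : G) * (w' : G) ∈ DivSet R c),
    genLength R ((w : G) * (w' : G)) = genLength R (w : G) + genLength R (w' : G) ∧
    x = FreeMonoid.of w * FreeMonoid.of w' ∧
    y = FreeMonoid.of (⟨(w : G) * (w' : G), h⟩ : DivSet R c)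

/-- The dual monoid `M(P_c)`. -/
abbrev DualMonoid (R : Set G) (c : G) := (conGen (DualRel R c)).Quotient

/-- The generator `⟨w⟩` of the dual monoid `M(P_c)`. -/
def dualGen (R : Set G) (c : G) (w : DivSet R c) : DualMonoid R c :=
  (conGen (DualRel R c)).mk' (FreeMonoid.of w)

theorem genLength_one (R : Set G) : genLength R (1 : G) = 0 :=
  Nat.sInf_eq_zero.2 (Or.inl ⟨[], rfl, by simp, rfl⟩)

theorem c_mem_DivSet (R : Set G) (c : G) : c ∈ DivSet R c :=
  ⟨1, (mul_one c).symm, by rw [genLength_one, Nat.add_zero]⟩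


-- Auxiliary lemmas

theorem compl_spec (R : Set G) {c : G} (hbal : GBalanced R c) {w : G}
    (hw : w ∈ DivSet R c) :
    w⁻¹ * c ∈ DivSet R c ∧ genLength R c = genLength R w + genLength R (w⁻¹ * c) := by
  obtain ⟨h', hc, hlen⟩ := hw
  have hh' : w⁻¹ * c = h' := by rw [hc]; group
  rw [hh']
  refine ⟨(hbal h').2 ⟨w, hc, ?_⟩, hlen⟩
  exact hlen

theorem dualGen_mul (R : Set G) (c : G) (w w' : DivSet R c)
    (h : (w : G) * (w' : G) ∈ DivSet R c)
    (hlen : genLength R ((w : G) * (w' : G)) = genLength R (w : G) + genLength R (w' : G)) :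
    dualGen R c w * dualGen R c w' = dualGen R c ⟨(w : G) * (w' : G), h⟩ := by
  unfold dualGen
  rw [← map_mul]
  exact (Con.eq _).2 (ConGen.Rel.of _ _ ⟨w, w', h, hlen, rfl, rfl⟩)

theorem statement9 {G : Type*} [Group G] (R : Set G)
    (hgen : Submonoid.closure R = ⊤) (c : G) (hbal : GBalanced R c) :
    ∀ m : DualMonoid R c, ∃ (k : ℕ) (m' : DualMonoid R c),
      m * m' = (dualGen R c ⟨c, c_mem_DivSet R c⟩) ^ k := by
  set C : DualMonoid R c := dualGen R c ⟨c, c_mem_DivSet R c⟩ with hC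
  -- complement lemma in monoid form
  have hcomp : ∀ w : DivSet R c, ∃ u : DivSet R c, dualGen R c w * dualGen R c u = C := by
    intro w
    obtain ⟨hmem, hlen⟩ := compl_spec R hbal w.2
    refine ⟨⟨(w : G)⁻¹ * c, hmem⟩, ?_⟩
    have := dualGen_mul R c w ⟨(w : G)⁻¹ * c, hmem⟩
      (by simpa [mul_inv_cancel_left] using c_mem_DivSet R c)
      (by simpa [mul_inv_cancel_left] using hlen)
    rw [this, hC]
    congr 1
    ext
    simp [mul_inv_cancel_left]
  -- conjugation lemma
  have hconj : ∀ w : DivSet R c, ∃ u : DivSet R c,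
      dualGen R c w * C = C * dualGen R c u := by
    intro w
    obtain ⟨w', hw'⟩ := hcomp w
    obtain ⟨w'', hw''⟩ := hcomp w'
    refine ⟨w'', ?_⟩
    conv_lhs => rw [← hw'']
    rw [← mul_assoc, hw']
  -- push lemma
  have hpush : ∀ (k : ℕ) (w : DivSet R c), ∃ u : DivSet R c,
      dualGen R c w * C ^ k = C ^ k * dualGen R c u := by
    intro k
    induction k with
    | zero => exact fun w => ⟨w, by simp⟩
    | succ k ih =>
      intro w
      obtain ⟨u, hu⟩ := hconj w
      obtain ⟨v, hv⟩ := ih u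
      refine ⟨v, ?_⟩
      rw [pow_succ', ← mul_assoc, hu, mul_assoc, hv, ← mul_assoc]
  intro m
  obtain ⟨x, rfl⟩ := Con.mk'_surjective m
  induction x using FreeMonoid.recOn with
  | one => exact ⟨0, 1, by simp⟩
  | of_mul w xs ih =>
    obtain ⟨j, m'', hm''⟩ := ih
    obtain ⟨u, hu⟩ := hpush j w
    obtain ⟨v, hv⟩ := hcomp u
    refine ⟨j + 1, m'' * (dualGen R c v), ?_⟩
    have hsplit : (conGen (DualRel R c)).mk' (FreeMonoid.of w * xs)
        = dualGen R c w * (conGen (DualRel R c)).mk' xs := by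
      rw [map_mul]; rfl
    rw [hsplit, mul_assoc, ← mul_assoc _ m'', hm'', ← mul_assoc, hu, mul_assoc, hv,
      pow_succ]
end
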